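/- arXiv:1409.4156 — 5 statements merged into one kernel-verified Lean document; each statement's English description precedes it below -/
import Mathlib

section
/- Existence of the multiplicative norm: Let f : S → T be an N-map of truncation posets and k a commutative ring. Define f^w_⊗ : k^S → k^T by (f^w_⊗⟨x_s⟩)_t = Π_{s ∈ f^{-hat}(t)} x_s^{|t|/|s|}, where f^{-hat}(t) is the finite set of minimal elements s with t | f(s). Then for every (a_s) ∈ W_S(k), the vector f^w_⊗(w(a_s)) lies in the image of the ghost map w : W_T(k) → k^T. Consequently there is a unique natural (in k) map f_⊗ : W_S(k) → W_T(k) covering f^w_⊗ on ghost coordinates. -/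
namespace TP

def IsTPNorm {S : Type*} [PartialOrder S] (ν : S → ℕ) : Prop :=
  (∀ s, 0 < ν s) ∧
  (∀ s t : S, s ≤ t → ν s ∣ ν t) ∧
  (∀ s t u : S, s ≤ t → t ≤ u → ν u / ν s = (ν u / ν t) * (ν t / ν s)) ∧
  (∀ (s : S) (d : ℕ), d ∣ ν s → ∃! t : S, t ≤ s ∧ ν t = ν s / d) ∧
  (∀ s t t' : S, s ≤ t → s ≤ t' → ν t = ν t' → t = t')

def IsTPMap {S T : Type*} [PartialOrder S] [PartialOrder T] (νS : S → ℕ) (νT : T → ℕ)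
    (f : S → T) : Prop :=
  ∀ s₁ s₂ : S, s₁ ≤ s₂ → f s₁ ≤ f s₂ ∧ νT (f s₂) / νT (f s₁) = νS s₂ / νS s₁

def IsFibration {S T : Type*} [PartialOrder S] [PartialOrder T] (f : S → T) : Prop :=
  ∀ (s : S) (t' : T), f s ≤ t' → ∃ s', s ≤ s' ∧ f s' = t'

def IsTMap {S T : Type*} [PartialOrder S] [PartialOrder T] (νS : S → ℕ) (νT : T → ℕ)
    (f : S → T) : Prop :=
  IsTPMap νS νT f ∧ IsFibration f ∧ ∀ t : T, (f ⁻¹' {t}).Finite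

def SameComp {S : Type*} [PartialOrder S] (ν : S → ℕ) (a b : S) : Prop :=
  ∃ i : S, ν i = 1 ∧ i ≤ a ∧ i ≤ b

def hatPreim {S T : Type*} [PartialOrder S] [PartialOrder T] (f : S → T) (t : T) : Set S :=
  {s | t ≤ f s ∧ ∀ s', s' ≤ s → t ≤ f s' → s' = s}

def IsNMap {S T : Type*} [PartialOrder S] [PartialOrder T] (νS : S → ℕ) (νT : T → ℕ)
    (f : S → T) : Prop :=
  IsTPMap νS νT f ∧
  (∀ (s : S) (t' : T), SameComp νT (f s) t' → ∃ s', SameComp νS s s' ∧ t' ≤ f s') ∧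
  ∀ t : T, (hatPreim f t).Finite

noncomputable def ghost {S : Type*} [PartialOrder S] (ν : S → ℕ) {k : Type*} [CommRing k]
    (a : S → k) : S → k :=
  fun s => ∑ᶠ t ∈ {t : S | t ≤ s}, (ν t : k) * a t ^ (ν s / ν t)

end TP


noncomputable def nmGhost {S T : Type*} [PartialOrder S] [PartialOrder T]
    (νS : S → ℕ) (νT : T → ℕ) (f : S → T) {k : Type*} [CommRing k] (x : S → k) : T → k :=
  fun t => ∏ᶠ s ∈ TP.hatPreim f t, x s ^ (νT t / νS s)

namespace TPAux
open TP

section Basic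

variable {S : Type*} [PartialOrder S] {ν : S → ℕ} (h : IsTPNorm ν)
include h

theorem npos (s : S) : 0 < ν s := h.1 s

theorem dvd_of_le {s t : S} (hst : s ≤ t) : ν s ∣ ν t := h.2.1 s t hst

theorem down_exists {s : S} {d : ℕ} (hd : d ∣ ν s) : ∃ t, t ≤ s ∧ ν t = d := by
  obtain ⟨t, ⟨ht1, ht2⟩, -⟩ := h.2.2.2.1 s (ν s / d) (Nat.div_dvd_of_dvd hd)
  exact ⟨t, ht1, by rw [ht2, Nat.div_div_self hd (npos h s).ne']⟩

theorem down_inj {s t₁ t₂ : S} (h1 : t₁ ≤ s) (h2 : t₂ ≤ s) (he : ν t₁ = ν t₂) : t₁ = t₂ := by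
  obtain ⟨t, -, ht⟩ := h.2.2.2.1 s (ν s / ν t₁) (Nat.div_dvd_of_dvd (dvd_of_le h h1))
  have hd : ν s / (ν s / ν t₁) = ν t₁ := Nat.div_div_self (dvd_of_le h h1) (npos h s).ne'
  rw [ht t₁ ⟨h1, by rw [hd]⟩, ht t₂ ⟨h2, by rw [hd, he]⟩]

theorem down_le {s t₁ t₂ : S} (h1 : t₁ ≤ s) (h2 : t₂ ≤ s) (hd : ν t₁ ∣ ν t₂) : t₁ ≤ t₂ := by
  obtain ⟨u, hu1, hu2⟩ := down_exists h (s := t₂) hd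
  have e := down_inj h h1 (hu1.trans h2) hu2.symm
  rw [e]; exact hu1

theorem norm_lt {s t : S} (hts : t ≤ s) (hne : t ≠ s) : ν t < ν s :=
  lt_of_le_of_ne (Nat.le_of_dvd (npos h s) (dvd_of_le h hts))
    (fun he => hne (down_inj h hts le_rfl he))

theorem down_finite (s : S) : {t | t ≤ s}.Finite := by
  have : ((ν '' {t | t ≤ s})).Finite :=
    (Set.finite_Icc 1 (ν s)).subset (by
      rintro x ⟨t, ht, rfl⟩
      exact ⟨npos h t, Nat.le_of_dvd (npos h s) (dvd_of_le h ht)⟩)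
  exact Set.Finite.of_finite_image this (fun a ha b hb he => down_inj h ha hb he)

theorem exists_min (s : S) : ∃ i, i ≤ s ∧ ν i = 1 := down_exists h (one_dvd _)

theorem min_unique {s i i' : S} (h1 : i ≤ s) (h2 : ν i = 1) (h3 : i' ≤ s) (h4 : ν i' = 1) :
    i = i' := down_inj h h1 h3 (h2.trans h4.symm)

theorem sameComp_of_le {a b : S} (hab : a ≤ b) : SameComp ν a b := by
  obtain ⟨i, hi1, hi2⟩ := exists_min h a
  exact ⟨i, hi2, hi1, hi1.trans hab⟩

omit h in
theorem sameComp_symm {a b : S} : SameComp ν a b → SameComp ν b a := by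
  rintro ⟨i, h1, h2, h3⟩; exact ⟨i, h1, h3, h2⟩

theorem sameComp_trans {a b c : S} : SameComp ν a b → SameComp ν b c → SameComp ν a c := by
  rintro ⟨i, h1, h2, h3⟩ ⟨j, h4, h5, h6⟩
  exact ⟨i, h1, h2, (min_unique h h3 h1 h5 h4) ▸ h6⟩

theorem le_of_sameComp_dvd {a b : S} (hc : SameComp ν a b) (hd : ν a ∣ ν b) : a ≤ b := by
  obtain ⟨i, h1, h2, h3⟩ := hc
  obtain ⟨u, hu1, hu2⟩ := down_exists h (s := b) hd
  have hiu : i ≤ u := down_le h h3 (hu1.trans le_rfl) (by rw [h1]; exact one_dvd _)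
  have : a = u := h.2.2.2.2 i a u h2 hiu hu2.symm
  exact this ▸ hu1

theorem eq_of_sameComp_norm_eq {a b : S} (hc : SameComp ν a b) (he : ν a = ν b) : a = b := by
  obtain ⟨i, h1, h2, h3⟩ := hc
  exact h.2.2.2.2 i a b h2 h3 he

end Basic

end TPAux

namespace TPAux
open TP

section Numeric

theorem aux_div_dvd {τ c n : ℕ} (hτ : 0 < τ) (h : τ ∣ n * c) : τ / Nat.gcd τ c ∣ n := by
  set g := Nat.gcd τ c with hg
  have hgpos : 0 < g := Nat.gcd_pos_of_pos_left _ hτ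
  have hcop : Nat.Coprime (τ / g) (c / g) := Nat.coprime_div_gcd_div_gcd hgpos
  refine hcop.dvd_of_dvd_mul_right ?_
  obtain ⟨q, hq⟩ := h
  refine ⟨q, Nat.eq_of_mul_eq_mul_right hgpos ?_⟩
  have e1 : n * (c / g) * g = n * c := by
    rw [mul_assoc, Nat.div_mul_cancel (Nat.gcd_dvd_right τ c)]
  have e2 : τ / g * q * g = τ * q := by
    rw [mul_comm (τ / g) q, mul_assoc, Nat.div_mul_cancel (Nat.gcd_dvd_left τ c), mul_comm]
  rw [e1, e2, hq]

theorem aux_dvd_quot_mul (τ c : ℕ) : τ ∣ τ / Nat.gcd τ c * c := by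
  have e : τ / Nat.gcd τ c * c = τ * (c / Nat.gcd τ c) :=
    calc τ / Nat.gcd τ c * c = τ / Nat.gcd τ c * (Nat.gcd τ c * (c / Nat.gcd τ c)) := by
          rw [Nat.mul_div_cancel' (Nat.gcd_dvd_right τ c)]
      _ = (τ / Nat.gcd τ c * Nat.gcd τ c) * (c / Nat.gcd τ c) := by ring
      _ = τ * (c / Nat.gcd τ c) := by rw [Nat.div_mul_cancel (Nat.gcd_dvd_left τ c)]
  rw [e]; exact Dvd.intro _ rfl

theorem gcd_quot_dvd {τ τ' c a a' : ℕ} (hτ : 0 < τ) (hτ' : 0 < τ') (hd : τ' ∣ τ)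
    (ha : a * Nat.gcd τ c = τ) (ha' : a' * Nat.gcd τ' c = τ') : a' ∣ a := by
  obtain ⟨k, rfl⟩ := hd
  set g := Nat.gcd (τ' * k) c with hgdef
  set g' := Nat.gcd τ' c with hg'def
  have hgpos : 0 < g := Nat.gcd_pos_of_pos_left _ hτ
  have hg'pos : 0 < g' := Nat.gcd_pos_of_pos_left _ hτ'
  have hgk : g ∣ g' * k := by
    have h1 : g ∣ Nat.gcd (τ' * k) (c * k) :=
      Nat.dvd_gcd (Nat.gcd_dvd_left _ _) ((Nat.gcd_dvd_right _ _).trans (Dvd.intro k rfl))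
    rwa [Nat.gcd_mul_right] at h1
  obtain ⟨w, hw⟩ := hgk
  refine ⟨w, Nat.eq_of_mul_eq_mul_right (Nat.mul_pos hgpos hg'pos) ?_⟩
  have e1 : a * (g * g') = τ' * k * g' := by rw [← ha]; ring
  have e2 : a' * w * (g * g') = τ' * k * g' := by
    have : τ' * k * g' = τ' * (g' * k) := by ring
    rw [this, hw, ← ha']; ring
  rw [e1, e2]

theorem prime_pow_dvd_of_not_dvd {p ν' ν'' d : ℕ} (hp : p.Prime) (hν : ν' * p = ν'')
    (hν' : 0 < ν') (hd : d ∣ ν'') (hnd : ¬ d ∣ ν') : p ^ (ν''.factorization p) ∣ d := by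
  have hν''pos : 0 < ν'' := hν ▸ Nat.mul_pos hν' hp.pos
  have hdpos : 0 < d := Nat.pos_of_dvd_of_pos hd hν''pos
  have hfact : ν''.factorization = ν'.factorization + p.factorization := by
    rw [← hν, Nat.factorization_mul hν'.ne' hp.ne_zero]
  by_contra hcon
  apply hnd
  rw [← Nat.factorization_le_iff_dvd hdpos.ne' hν'.ne']
  rw [← Nat.factorization_le_iff_dvd hdpos.ne' hν''pos.ne'] at hd
  intro q
  rcases eq_or_ne q p with rfl | hqp
  · have h1 : ¬ (ν''.factorization q ≤ d.factorization q) := by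
      intro hle
      exact hcon ((Nat.Prime.pow_dvd_iff_le_factorization hp hdpos.ne').mpr hle)
    have h2 : d.factorization q ≤ ν''.factorization q := hd q
    have h3 : ν''.factorization q = ν'.factorization q + 1 := by
      rw [hfact]; simp [hp.factorization]
    omega
  · have h2 : d.factorization q ≤ ν''.factorization q := hd q
    have h3 : ν''.factorization q = ν'.factorization q := by
      rw [hfact]; simp [hp.factorization, Finsupp.single_apply, hqp.symm]
    omega

end Numeric

section MapLemmas

variable {S T : Type*} [PartialOrder S] [PartialOrder T] {νS : S → ℕ} {νT : T → ℕ} {f : S → T}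
variable (hS : IsTPNorm νS) (hT : IsTPNorm νT) (hf1 : IsTPMap νS νT f)

theorem map_mono (hf1 : IsTPMap νS νT f) {s₁ s₂ : S} (h : s₁ ≤ s₂) : f s₁ ≤ f s₂ :=
  (hf1 s₁ s₂ h).1

include hS hT hf1 in
theorem map_cross {s₁ s₂ : S} (hle : s₁ ≤ s₂) :
    νT (f s₁) * νS s₂ = νS s₁ * νT (f s₂) := by
  have hAB : νT (f s₁) ∣ νT (f s₂) := dvd_of_le hT (map_mono hf1 hle)
  have hab : νS s₁ ∣ νS s₂ := dvd_of_le hS hle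
  have h2 := (hf1 s₁ s₂ hle).2
  have e1 : νT (f s₂) = νT (f s₁) * (νT (f s₂) / νT (f s₁)) :=
    (Nat.mul_div_cancel' hAB).symm
  have e2 : νS s₂ = νS s₁ * (νS s₂ / νS s₁) := (Nat.mul_div_cancel' hab).symm
  calc νT (f s₁) * νS s₂ = νT (f s₁) * (νS s₁ * (νS s₂ / νS s₁)) := by rw [← e2]
    _ = νS s₁ * (νT (f s₁) * (νT (f s₂) / νT (f s₁))) := by rw [← h2]; ring
    _ = νS s₁ * νT (f s₂) := by rw [← e1]

include hS hT hf1 in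
theorem map_norm {i s : S} (hi : i ≤ s) (h1 : νS i = 1) :
    νT (f s) = νS s * νT (f i) := by
  have := map_cross hS hT hf1 hi
  rw [h1, one_mul] at this
  rw [← this]; ring

end MapLemmas

section HatLemmas

variable {S T : Type*} [PartialOrder S] [PartialOrder T] {νS : S → ℕ} {νT : T → ℕ} {f : S → T}
variable (hS : IsTPNorm νS) (hT : IsTPNorm νT) (hf1 : IsTPMap νS νT f)
include hS hT hf1

theorem hat_norm {t : T} {s : S} (hs : s ∈ hatPreim f t) {i : S} (hi : i ≤ s)
    (h1 : νS i = 1) : νS s * Nat.gcd (νT t) (νT (f i)) = νT t := by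
  obtain ⟨hts, hmin⟩ := hs
  have hτpos : 0 < νT t := npos hT t
  have hτdvd : νT t ∣ νS s * νT (f i) := by
    rw [← map_norm hS hT hf1 hi h1]; exact dvd_of_le hT hts
  have hkey : νT t / Nat.gcd (νT t) (νT (f i)) ∣ νS s := aux_div_dvd hτpos hτdvd
  obtain ⟨s₀, hs₀le, hs₀ν⟩ := down_exists hS hkey
  have his₀ : i ≤ s₀ := down_le hS hi hs₀le (by rw [h1]; exact one_dvd _)
  have hfs₀ : νT (f s₀) = νT t / Nat.gcd (νT t) (νT (f i)) * νT (f i) := by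
    rw [map_norm hS hT hf1 his₀ h1, hs₀ν]
  have hts₀ : t ≤ f s₀ := by
    refine down_le hT hts (map_mono hf1 hs₀le) ?_
    rw [hfs₀]; exact aux_dvd_quot_mul _ _
  have he := hmin s₀ hs₀le hts₀
  rw [← he, hs₀ν]
  exact Nat.div_mul_cancel (Nat.gcd_dvd_left _ _)

theorem hat_mem_of {t : T} {s i : S} (hts : t ≤ f s) (hi : i ≤ s) (h1 : νS i = 1)
    (hn : νS s * Nat.gcd (νT t) (νT (f i)) = νT t) : s ∈ hatPreim f t := by
  refine ⟨hts, fun s' hs' hts' => ?_⟩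
  have his' : i ≤ s' := down_le hS hi hs' (by rw [h1]; exact one_dvd _)
  have hτdvd : νT t ∣ νS s' * νT (f i) := by
    rw [← map_norm hS hT hf1 his' h1]; exact dvd_of_le hT hts'
  have hkey : νT t / Nat.gcd (νT t) (νT (f i)) ∣ νS s' := aux_div_dvd (npos hT t) hτdvd
  have hg : 0 < Nat.gcd (νT t) (νT (f i)) := Nat.gcd_pos_of_pos_left _ (npos hT t)
  have hνs : νS s = νT t / Nat.gcd (νT t) (νT (f i)) := (Nat.div_eq_of_eq_mul_left hg hn.symm).symm
  exact down_inj hS hs' le_rfl (Nat.dvd_antisymm (dvd_of_le hS hs') (by rw [hνs]; exact hkey))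

theorem hat_exists_below {t : T} {s'' : S} (h : t ≤ f s'') :
    ∃ s, s ≤ s'' ∧ s ∈ hatPreim f t := by
  obtain ⟨i, hi, h1⟩ := exists_min hS s''
  have hτdvd : νT t ∣ νS s'' * νT (f i) := by
    rw [← map_norm hS hT hf1 hi h1]; exact dvd_of_le hT h
  have hkey : νT t / Nat.gcd (νT t) (νT (f i)) ∣ νS s'' := aux_div_dvd (npos hT t) hτdvd
  obtain ⟨s, hsle, hsν⟩ := down_exists hS hkey
  have his : i ≤ s := down_le hS hi hsle (by rw [h1]; exact one_dvd _)
  have hts : t ≤ f s := by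
    refine down_le hT h (map_mono hf1 hsle) ?_
    rw [map_norm hS hT hf1 his h1, hsν]; exact aux_dvd_quot_mul _ _
  refine ⟨s, hsle, hat_mem_of hS hT hf1 hts his h1 ?_⟩
  rw [hsν]; exact Nat.div_mul_cancel (Nat.gcd_dvd_left _ _)

theorem hat_dvd {t : T} {s : S} (hs : s ∈ hatPreim f t) : νS s ∣ νT t := by
  obtain ⟨i, hi, h1⟩ := exists_min hS s
  exact ⟨_, (hat_norm hS hT hf1 hs hi h1).symm⟩

theorem hat_comp_unique {t : T} {s₁ s₂ : S} (h1 : s₁ ∈ hatPreim f t) (h2 : s₂ ∈ hatPreim f t)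
    (hc : SameComp νS s₁ s₂) : s₁ = s₂ := by
  obtain ⟨i, hν, hi1, hi2⟩ := hc
  have e1 := hat_norm hS hT hf1 h1 hi1 hν
  have e2 := hat_norm hS hT hf1 h2 hi2 hν
  have hg : 0 < Nat.gcd (νT t) (νT (f i)) := Nat.gcd_pos_of_pos_left _ (npos hT t)
  exact eq_of_sameComp_norm_eq hS ⟨i, hν, hi1, hi2⟩
    (Nat.eq_of_mul_eq_mul_right hg (e1.trans e2.symm))

theorem hat_down {t' t : T} {s : S} (ht't : t' ≤ t) (hs : s ∈ hatPreim f t) :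
    ∃ s', s' ≤ s ∧ s' ∈ hatPreim f t' := by
  obtain ⟨i, hi, h1⟩ := exists_min hS s
  have ha := hat_norm hS hT hf1 hs hi h1
  have hdvd' : νT t' / Nat.gcd (νT t') (νT (f i)) ∣ νS s :=
    gcd_quot_dvd (npos hT t) (npos hT t') (dvd_of_le hT ht't) ha
      (Nat.div_mul_cancel (Nat.gcd_dvd_left _ _))
  obtain ⟨s', hs'le, hs'ν⟩ := down_exists hS hdvd'
  have his' : i ≤ s' := down_le hS hi hs'le (by rw [h1]; exact one_dvd _)
  have hts' : t' ≤ f s' := by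
    refine down_le hT (ht't.trans hs.1) (map_mono hf1 hs'le) ?_
    rw [map_norm hS hT hf1 his' h1, hs'ν]; exact aux_dvd_quot_mul _ _
  refine ⟨s', hs'le, hat_mem_of hS hT hf1 hts' his' h1 ?_⟩
  rw [hs'ν]; exact Nat.div_mul_cancel (Nat.gcd_dvd_left _ _)

theorem hat_up (hf : IsNMap νS νT f) {t' t : T} {s' : S} (ht't : t' ≤ t)
    (hs' : s' ∈ hatPreim f t') : ∃ s, s' ≤ s ∧ s ∈ hatPreim f t := by
  obtain ⟨j, hjt', hj1⟩ := exists_min hT t'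
  obtain ⟨s'', hcomp, hts''⟩ := hf.2.1 s' t ⟨j, hj1, hjt'.trans hs'.1, hjt'.trans ht't⟩
  obtain ⟨s, hsle, hsmem⟩ := hat_exists_below hS hT hf1 hts''
  have hcs : SameComp νS s' s := sameComp_trans hS hcomp (sameComp_symm (sameComp_of_le hS hsle))
  obtain ⟨i, hν, hi1, hi2⟩ := hcs
  have e1 := hat_norm hS hT hf1 hsmem hi2 hν
  have e2 := hat_norm hS hT hf1 hs' hi1 hν
  have hdvd : νS s' ∣ νS s :=
    gcd_quot_dvd (npos hT t) (npos hT t') (dvd_of_le hT ht't) e1 e2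
  exact ⟨s, le_of_sameComp_dvd hS ⟨i, hν, hi1, hi2⟩ hdvd, hsmem⟩

end HatLemmas

section RMachinery

open MvPolynomial

variable {σ : Type*}

noncomputable def frob (p : ℕ) : MvPolynomial σ ℤ →+* MvPolynomial σ ℤ :=
  (MvPolynomial.aeval (fun s : σ => (MvPolynomial.X s : MvPolynomial σ ℤ) ^ p)).toRingHom

theorem frob_X (p : ℕ) (s : σ) : frob p (X s : MvPolynomial σ ℤ) = X s ^ p := by
  simp [frob]

theorem frob_C (p : ℕ) (z : ℤ) : frob p (C z : MvPolynomial σ ℤ) = C z := by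
  simp [frob, algebraMap_eq]

theorem dvd_iff_coeff (n : ℤ) (r : MvPolynomial σ ℤ) :
    (n : MvPolynomial σ ℤ) ∣ r ↔ ∀ d, n ∣ r.coeff d := by
  rw [← eq_intCast (C : ℤ →+* MvPolynomial σ ℤ) n]
  exact C_dvd_iff_dvd_coeff n r

theorem frob_sub_pow (p : ℕ) (hp : p.Prime) (x : MvPolynomial σ ℤ) :
    (p : MvPolynomial σ ℤ) ∣ frob p x - x ^ p := by
  haveI : Fact p.Prime := ⟨hp⟩
  set π := (MvPolynomial.map (Int.castRingHom (ZMod p)) : MvPolynomial σ ℤ →+* MvPolynomial σ (ZMod p)) with hπ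
  have hcomp : π.comp (frob p) = (frobenius (MvPolynomial σ (ZMod p)) p).comp π := by
    apply MvPolynomial.ringHom_ext
    · intro z
      simp [hπ, frob_C, frobenius_def, ← map_pow, ZMod.pow_card]
    · intro s
      simp [hπ, frob_X, frobenius_def]
  have h0 : π (frob p x - x ^ p) = 0 := by
    have h1 : π (frob p x) = (π x) ^ p := by
      have := RingHom.congr_fun hcomp x
      simpa [frobenius_def] using this
    rw [map_sub, h1, map_pow, sub_self]
  have : ((p : ℤ) : MvPolynomial σ ℤ) ∣ frob p x - x ^ p := by
    rw [dvd_iff_coeff]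
    intro d
    have hc := congrArg (MvPolynomial.coeff d) h0
    rw [MvPolynomial.coeff_map] at hc
    rw [← ZMod.intCast_zmod_eq_zero_iff_dvd]
    simpa using hc
  simpa using this

variable {R : Type*} [CommRing R]

theorem pow_cong_step {p : ℕ} (hp : p.Prime) {x y : R} {c : ℕ} (hc : 1 ≤ c)
    (h : (p : R) ^ c ∣ x - y) : (p : R) ^ (c + 1) ∣ x ^ p - y ^ p := by
  have hgeom := geom_sum₂_mul x y p
  have hsum : (x - y) ∣ (∑ i ∈ Finset.range p, x ^ i * y ^ (p - 1 - i)) - p * y ^ (p - 1) := by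
    have hconst : (p : R) * y ^ (p - 1) = ∑ _i ∈ Finset.range p, y ^ (p - 1) := by
      rw [Finset.sum_const, Finset.card_range, nsmul_eq_mul]
    rw [hconst, ← Finset.sum_sub_distrib]
    apply Finset.dvd_sum
    intro i hi
    have hi' : i < p := Finset.mem_range.mp hi
    have e : x ^ i * y ^ (p - 1 - i) - y ^ (p - 1) = (x ^ i - y ^ i) * y ^ (p - 1 - i) := by
      rw [sub_mul]
      congr 1
      rw [← pow_add]
      congr 1
      omega
    rw [e]
    exact (sub_dvd_pow_sub_pow x y i).mul_right _
  obtain ⟨z, hz⟩ := hsum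
  have hsum' : (∑ i ∈ Finset.range p, x ^ i * y ^ (p - 1 - i))
      = (p : R) * y ^ (p - 1) + (x - y) * z := by linear_combination hz
  rw [← hgeom, hsum', add_mul]
  apply dvd_add
  · obtain ⟨w, hw⟩ := h
    exact ⟨y ^ (p - 1) * w, by rw [hw]; ring⟩
  · have h1 : (p : R) ^ (c + 1) ∣ (p : R) ^ (2 * c) := pow_dvd_pow _ (by omega)
    have h2 : (p : R) ^ (2 * c) ∣ (x - y) * z * (x - y) := by
      obtain ⟨w, hw⟩ := h
      exact ⟨w * z * w, by rw [hw]; ring⟩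
    exact h1.trans h2

theorem pow_cong {p : ℕ} (hp : p.Prime) {x y : R} {c : ℕ} (hc : 1 ≤ c)
    (h : (p : R) ^ c ∣ x - y) : ∀ k, (p : R) ^ (c + k) ∣ x ^ (p ^ k) - y ^ (p ^ k) := by
  intro k
  induction k with
  | zero => simpa using h
  | succ k ih =>
      have := pow_cong_step hp (by omega : 1 ≤ c + k) ih
      have e : ∀ w : R, (w ^ (p ^ k)) ^ p = w ^ (p ^ (k + 1)) := by
        intro w; rw [← pow_mul, pow_succ]
      rw [e, e] at this
      have e2 : c + (k + 1) = c + k + 1 := by omega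
      rw [e2]
      exact this

theorem pow_cong' {p : ℕ} (hp : p.Prime) {x y : R} {c k e : ℕ} (hc : 1 ≤ c)
    (h : (p : R) ^ c ∣ x - y) (he : p ^ k ∣ e) : (p : R) ^ (c + k) ∣ x ^ e - y ^ e := by
  obtain ⟨m, rfl⟩ := he
  have h1 := pow_cong hp hc h k
  have h2 : x ^ p ^ k - y ^ p ^ k ∣ x ^ (p ^ k * m) - y ^ (p ^ k * m) := by
    rw [pow_mul, pow_mul]
    exact sub_dvd_pow_sub_pow _ _ m
  exact h1.trans h2

theorem int_dvd_of_prime_pow {n : ℕ} (hn : 0 < n) {z : ℤ}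
    (h : ∀ p : ℕ, p.Prime → p ∣ n → (p : ℤ) ^ (n.factorization p) ∣ z) : (n : ℤ) ∣ z := by
  have hfac : n = ∏ p ∈ n.primeFactors, p ^ n.factorization p := by
    conv_lhs => rw [← Nat.factorization_prod_pow_eq_self hn.ne']
    rfl
  have hcast : (n : ℤ) = ∏ p ∈ n.primeFactors, (p : ℤ) ^ n.factorization p := by
    conv_lhs => rw [hfac]
    push_cast
    rfl
  rw [hcast]
  apply Finset.prod_dvd_of_coprime
  · intro p hp q hq hpq
    have h1 : Nat.Coprime (p ^ n.factorization p) (q ^ n.factorization q) :=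
      ((Nat.coprime_primes (Nat.prime_of_mem_primeFactors hp)
        (Nat.prime_of_mem_primeFactors hq)).mpr hpq).pow _ _
    have := Nat.Coprime.isCoprime h1
    simpa [Function.onFun] using this
  · intro p hp
    exact h p (Nat.prime_of_mem_primeFactors hp) (Nat.dvd_of_mem_primeFactors hp)

theorem R_dvd_of_prime_pow {n : ℕ} (hn : 0 < n) {r : MvPolynomial σ ℤ}
    (h : ∀ p : ℕ, p.Prime → p ∣ n → (p : MvPolynomial σ ℤ) ^ (n.factorization p) ∣ r) :
    (n : MvPolynomial σ ℤ) ∣ r := by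
  have : ((n : ℤ) : MvPolynomial σ ℤ) ∣ r := by
    rw [dvd_iff_coeff]
    intro d
    apply int_dvd_of_prime_pow hn
    intro p hp hpn
    have hpr := h p hp hpn
    have : (((p : ℤ) ^ n.factorization p : ℤ) : MvPolynomial σ ℤ) ∣ r := by
      push_cast
      exact_mod_cast hpr
    rw [dvd_iff_coeff] at this
    exact this d
  simpa using this

end RMachinery

section GhostLemmas

variable {T : Type*} [PartialOrder T] {ν : T → ℕ} (hT : IsTPNorm ν)
variable {k : Type*} [CommRing k]
include hT

theorem ghost_eq_sum (a : T → k) (t : T) :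
    ghost ν a t = ∑ u ∈ (down_finite hT t).toFinset, (ν u : k) * a u ^ (ν t / ν u) :=
  finsum_mem_eq_finite_toFinset_sum _ (down_finite hT t)

theorem ghost_congr {a b : T → k} {t : T} (h : ∀ u, u ≤ t → a u = b u) :
    ghost ν a t = ghost ν b t := by
  rw [ghost_eq_sum hT, ghost_eq_sum hT]
  refine Finset.sum_congr rfl fun u hu => ?_
  rw [Set.Finite.mem_toFinset] at hu
  rw [h u hu]

theorem ghost_map {k' : Type*} [CommRing k'] (g : k →+* k') (a : T → k) (t : T) :
    ghost ν (fun u => g (a u)) t = g (ghost ν a t) := by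
  rw [ghost_eq_sum hT, ghost_eq_sum hT, map_sum]
  refine Finset.sum_congr rfl fun u hu => ?_
  rw [map_mul, map_pow, map_natCast]

theorem ghost_unique {σ : Type*} {b b' : T → MvPolynomial σ ℤ} {t0 : T}
    (h : ∀ u, u ≤ t0 → ghost ν b u = ghost ν b' u) : ∀ u, u ≤ t0 → b u = b' u := by
  suffices key : ∀ n, ∀ u, u ≤ t0 → ν u ≤ n → b u = b' u by
    intro u hu; exact key (ν u) u hu le_rfl
  intro n
  induction n with
  | zero => intro u _ h0; exact absurd h0 (by have := npos hT u; omega)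
  | succ n ih =>
    intro u hu hun
    have hgu := h u hu
    rw [ghost_eq_sum hT, ghost_eq_sum hT] at hgu
    classical
    have hmem : u ∈ (down_finite hT u).toFinset := by simp [Set.Finite.mem_toFinset]
    rw [← Finset.add_sum_erase _ _ hmem, ← Finset.add_sum_erase _ _ hmem] at hgu
    have hrest : ∀ w ∈ ((down_finite hT u).toFinset).erase u,
        (ν w : MvPolynomial σ ℤ) * b w ^ (ν u / ν w)
          = (ν w : MvPolynomial σ ℤ) * b' w ^ (ν u / ν w) := by
      intro w hw
      obtain ⟨hwne, hwmem⟩ := Finset.mem_erase.mp hw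
      rw [Set.Finite.mem_toFinset] at hwmem
      have hlt : ν w < ν u := norm_lt hT hwmem hwne
      rw [ih w (hwmem.trans hu) (by omega)]
    rw [Finset.sum_congr rfl hrest] at hgu
    have hgu2 : (ν u : MvPolynomial σ ℤ) * b u ^ (ν u / ν u)
        = (ν u : MvPolynomial σ ℤ) * b' u ^ (ν u / ν u) := by
      exact add_right_cancel hgu
    rw [Nat.div_self (npos hT u), pow_one, pow_one] at hgu2
    exact mul_left_cancel₀ (Nat.cast_ne_zero.mpr (npos hT u).ne') hgu2

end GhostLemmas

section Dwork

open MvPolynomial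

variable {σ : Type*} {T : Type*} [PartialOrder T] {ν : T → ℕ} (hT : IsTPNorm ν)
include hT

theorem dwork_exists (c : T → MvPolynomial σ ℤ)
    (hc : ∀ (p : ℕ), p.Prime → ∀ (tp t : T), tp ≤ t → ν tp * p = ν t →
      (p : MvPolynomial σ ℤ) ^ ((ν t).factorization p) ∣ c t - frob p (c tp)) :
    ∃ b : T → MvPolynomial σ ℤ, ∀ t, ghost ν b t = c t := by
  classical
  have main : ∀ n, ∀ t : T, ν t ≤ n →
      ∃ b : T → MvPolynomial σ ℤ, ∀ u, u ≤ t → ghost ν b u = c u := by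
    intro n
    induction n with
    | zero => intro t h0; exact absurd h0 (by have := npos hT t; omega)
    | succ n ih =>
      intro t hn
      rcases Nat.lt_or_ge (ν t) (n + 1) with hlt | hge
      · exact ih t (by omega)
      have hνt : ν t = n + 1 := by omega
      set b₀ : T → MvPolynomial σ ℤ :=
        fun u => if h : ν u ≤ n then (ih u h).choose u else 0 with hb₀
      have hb₀val : ∀ u (h : ν u ≤ n), b₀ u = (ih u h).choose u := by
        intro u h; rw [hb₀]; simp [h]
      have hb₀eq : ∀ u, u < t → ghost ν b₀ u = c u := by
        intro u hu
        have hνu : ν u ≤ n := by have := norm_lt hT hu.le hu.ne; omega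
        have hsol := (ih u hνu).choose_spec
        have hcong : ∀ w, w ≤ u → b₀ w = (ih u hνu).choose w := by
          intro w hw
          have hνw : ν w ≤ n :=
            le_trans (Nat.le_of_dvd (npos hT u) (dvd_of_le hT hw)) hνu
          rw [hb₀val w hνw]
          refine ghost_unique hT (t0 := w) ?_ w le_rfl
          intro x hx
          rw [(ih w hνw).choose_spec x hx, (ih u hνu).choose_spec x (hx.trans hw)]
        rw [ghost_congr hT hcong]
        exact hsol u le_rfl
      set SS0 := ∑ u ∈ ((down_finite hT t).toFinset).erase t,
        (ν u : MvPolynomial σ ℤ) * b₀ u ^ (ν t / ν u) with hSS0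
      have hdvd : (ν t : MvPolynomial σ ℤ) ∣ c t - SS0 := by
        apply R_dvd_of_prime_pow (npos hT t)
        intro p hp hpν
        set m := (ν t).factorization p with hm
        have hm1 : 1 ≤ m :=
          (Nat.Prime.pow_dvd_iff_le_factorization hp (npos hT t).ne').mp (by simpa using hpν)
        obtain ⟨tp, htp_le, htpν⟩ := down_exists hT (Nat.div_dvd_of_dvd hpν)
        have htpmul : ν tp * p = ν t := by rw [htpν]; exact Nat.div_mul_cancel hpν
        have htppos : 0 < ν tp := npos hT tp
        have htpne : tp ≠ t := by
          intro he
          rw [he] at htpmul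
          have h2 := hp.two_le
          have h3 := npos hT t
          nlinarith
        have htp_lt : tp < t := lt_of_le_of_ne htp_le htpne
        have hmtp : (ν tp).factorization p + 1 = m := by
          rw [hm, ← htpmul, Nat.factorization_mul htppos.ne' hp.ne_zero]
          simp [hp.factorization]
        have hctp : c tp = ∑ u ∈ (down_finite hT tp).toFinset,
            (ν u : MvPolynomial σ ℤ) * b₀ u ^ (ν tp / ν u) := by
          rw [← ghost_eq_sum hT, hb₀eq tp htp_lt]
        have hfrob : frob p (c tp) = ∑ u ∈ (down_finite hT tp).toFinset,
            (ν u : MvPolynomial σ ℤ) * (frob p (b₀ u)) ^ (ν tp / ν u) := by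
          rw [hctp, map_sum]
          refine Finset.sum_congr rfl fun u hu => ?_
          rw [map_mul, map_pow, map_natCast]
        set S₁ := ∑ u ∈ (down_finite hT tp).toFinset,
          (ν u : MvPolynomial σ ℤ) * (b₀ u) ^ (ν t / ν u) with hS₁
        have hd1 : (p : MvPolynomial σ ℤ) ^ m ∣ frob p (c tp) - S₁ := by
          rw [hfrob, hS₁, ← Finset.sum_sub_distrib]
          apply Finset.dvd_sum
          intro u hu
          rw [Set.Finite.mem_toFinset] at hu
          obtain ⟨q, hq⟩ := dvd_of_le hT hu
          have hupos : 0 < ν u := npos hT u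
          have hq0 : q ≠ 0 := by
            rintro rfl
            rw [Nat.mul_zero] at hq
            omega
          have e1 : ν tp / ν u = q := by rw [hq]; exact Nat.mul_div_cancel_left _ hupos
          have e2 : ν t / ν u = q * p := by
            rw [← htpmul, hq, mul_assoc]; exact Nat.mul_div_cancel_left _ hupos
          rw [e1, e2]
          set au := (ν u).factorization p with hau_def
          have hau : (p : MvPolynomial σ ℤ) ^ au ∣ ((ν u : ℕ) : MvPolynomial σ ℤ) := by
            have h1 := Nat.cast_dvd_cast (α := MvPolynomial σ ℤ) (Nat.ordProj_dvd (ν u) p)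
            rwa [Nat.cast_pow] at h1
          have hfq : au + q.factorization p = m - 1 := by
            have h1 : (ν tp).factorization p = au + q.factorization p := by
              rw [hq, Nat.factorization_mul hupos.ne' hq0]; rfl
            omega
          have hau_le : au ≤ m - 1 := by omega
          have hk : p ^ (m - 1 - au) ∣ q := by
            rw [show m - 1 - au = q.factorization p by omega]
            exact Nat.ordProj_dvd q p
          have hfb : (p : MvPolynomial σ ℤ) ^ 1 ∣ frob p (b₀ u) - b₀ u ^ p := by
            simpa using frob_sub_pow p hp (b₀ u)
          have hpow := pow_cong' hp le_rfl hfb hk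
          have hterm : (ν u : MvPolynomial σ ℤ) * frob p (b₀ u) ^ q
              - (ν u : MvPolynomial σ ℤ) * b₀ u ^ (q * p)
              = (ν u : MvPolynomial σ ℤ) * (frob p (b₀ u) ^ q - (b₀ u ^ p) ^ q) := by
            rw [mul_sub, ← pow_mul, mul_comm p q]
          rw [hterm, show m = au + (1 + (m - 1 - au)) by omega, pow_add]
          exact mul_dvd_mul hau hpow
        have hsub : (down_finite hT tp).toFinset ⊆ ((down_finite hT t).toFinset).erase t := by
          intro u hu
          rw [Set.Finite.mem_toFinset] at hu
          rw [Finset.mem_erase, Set.Finite.mem_toFinset]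
          constructor
          · intro he
            have h1 := norm_lt hT htp_le htpne
            have h2 := Nat.le_of_dvd htppos (dvd_of_le hT hu)
            rw [he] at h2
            omega
          · exact hu.trans htp_le
        have hd2 : (p : MvPolynomial σ ℤ) ^ m ∣ SS0 - S₁ := by
          have hsplit : SS0 - S₁ = ∑ u ∈ (((down_finite hT t).toFinset).erase t)
              \ (down_finite hT tp).toFinset,
              (ν u : MvPolynomial σ ℤ) * b₀ u ^ (ν t / ν u) := by
            rw [hSS0, hS₁, ← Finset.sum_sdiff hsub, add_sub_cancel_right]
          rw [hsplit]
          apply Finset.dvd_sum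
          intro u hu
          rw [Finset.mem_sdiff, Finset.mem_erase, Set.Finite.mem_toFinset,
            Set.Finite.mem_toFinset] at hu
          obtain ⟨⟨hune, hule⟩, hnot⟩ := hu
          have hnd : ¬ ν u ∣ ν tp := fun hd => hnot (down_le hT hule htp_le hd)
          have hppow := prime_pow_dvd_of_not_dvd hp htpmul htppos (dvd_of_le hT hule) hnd
          have h1 := Nat.cast_dvd_cast (α := MvPolynomial σ ℤ) hppow
          rw [Nat.cast_pow] at h1
          exact h1.mul_right _
        have hd0 := hc p hp tp t htp_le htpmul
        have hsplit2 : c t - SS0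
            = (c t - frob p (c tp)) + (frob p (c tp) - S₁) - (SS0 - S₁) := by ring
        rw [hsplit2]
        exact dvd_sub (dvd_add hd0 hd1) hd2
      obtain ⟨qq, hqq⟩ := hdvd
      refine ⟨Function.update b₀ t qq, ?_⟩
      intro u hu
      rcases eq_or_ne u t with rfl | hne
      · rw [ghost_eq_sum hT]
        have hmem : u ∈ (down_finite hT u).toFinset := by simp [Set.Finite.mem_toFinset]
        rw [← Finset.add_sum_erase _ _ hmem]
        have hsame : ∀ w ∈ ((down_finite hT u).toFinset).erase u,
            (ν w : MvPolynomial σ ℤ) * (Function.update b₀ u qq w) ^ (ν u / ν w)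
              = (ν w : MvPolynomial σ ℤ) * b₀ w ^ (ν u / ν w) := by
          intro w hw
          rw [Function.update_of_ne (Finset.mem_erase.mp hw).1]
        rw [Finset.sum_congr rfl hsame, Function.update_self, Nat.div_self (npos hT u), pow_one]
        linear_combination -hqq
      · have hlt : u < t := lt_of_le_of_ne hu hne
        have hcong : ∀ w, w ≤ u → Function.update b₀ t qq w = b₀ w := by
          intro w hw
          refine Function.update_of_ne ?_ _ _
          intro he
          have h1 := Nat.le_of_dvd (npos hT u) (dvd_of_le hT hw)
          have h2 := norm_lt hT hu hne
          rw [he] at h1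
          omega
        rw [ghost_congr hT hcong]
        exact hb₀eq u hlt
  refine ⟨fun t => (main (ν t) t le_rfl).choose t, fun t => ?_⟩
  have hcong : ∀ u, u ≤ t →
      (main (ν u) u le_rfl).choose u = (main (ν t) t le_rfl).choose u := by
    intro u hu
    refine ghost_unique hT (t0 := u) ?_ u le_rfl
    intro x hx
    rw [(main (ν u) u le_rfl).choose_spec x hx, (main (ν t) t le_rfl).choose_spec x (hx.trans hu)]
  rw [ghost_congr hT hcong]
  exact (main (ν t) t le_rfl).choose_spec t le_rfl

end Dwork

section GcdFact

theorem fact_mul_apply {a b p : ℕ} (ha : a ≠ 0) (hb : b ≠ 0) :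
    (a * b).factorization p = a.factorization p + b.factorization p := by
  rw [Nat.factorization_mul ha hb]; rfl

theorem fact_gcd_apply {a b p : ℕ} (ha : a ≠ 0) (hb : b ≠ 0) :
    (Nat.gcd a b).factorization p = min (a.factorization p) (b.factorization p) := by
  rw [Nat.factorization_gcd ha hb]
  rfl

theorem fact_prime_apply {p q : ℕ} (hp : p.Prime) :
    p.factorization q = if p = q then 1 else 0 := by
  rw [hp.factorization, Finsupp.single_apply]

theorem fact_mul_prime_apply {τ' p q : ℕ} (hp : p.Prime) (hτ' : τ' ≠ 0) :
    (τ' * p).factorization q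
      = τ'.factorization q + (if p = q then 1 else 0) := by
  rw [fact_mul_apply hτ' hp.ne_zero, fact_prime_apply hp]

theorem gcd_pow_eq {p τ' c : ℕ} (hp : p.Prime) (hτ' : τ' ≠ 0) (hc : c ≠ 0)
    (h : c.factorization p < (τ' * p).factorization p) :
    Nat.gcd (τ' * p) c = Nat.gcd τ' c := by
  have hτp : τ' * p ≠ 0 := Nat.mul_ne_zero hτ' hp.ne_zero
  have hMp : (τ' * p).factorization p = τ'.factorization p + 1 := by
    rw [fact_mul_prime_apply hp hτ', if_pos rfl]
  apply Nat.eq_of_factorization_eq (Nat.gcd_ne_zero_right hc) (Nat.gcd_ne_zero_right hc)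
  intro q
  rw [fact_gcd_apply hτp hc, fact_gcd_apply hτ' hc, fact_mul_prime_apply hp hτ']
  rcases eq_or_ne p q with rfl | hqp
  · rw [if_pos rfl]
    rw [hMp] at h
    omega
  · rw [if_neg hqp]
    omega

theorem gcd_pow_succ {p τ' c : ℕ} (hp : p.Prime) (hτ' : τ' ≠ 0) (hc : c ≠ 0)
    (h : (τ' * p).factorization p ≤ c.factorization p) :
    Nat.gcd (τ' * p) c = p * Nat.gcd τ' c := by
  have hτp : τ' * p ≠ 0 := Nat.mul_ne_zero hτ' hp.ne_zero
  have hMp : (τ' * p).factorization p = τ'.factorization p + 1 := by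
    rw [fact_mul_prime_apply hp hτ', if_pos rfl]
  apply Nat.eq_of_factorization_eq (Nat.gcd_ne_zero_right hc)
    (Nat.mul_ne_zero hp.ne_zero (Nat.gcd_ne_zero_right hc))
  intro q
  have e2 : (p * Nat.gcd τ' c).factorization q
      = (if p = q then 1 else 0) + min (τ'.factorization q) (c.factorization q) := by
    rw [fact_mul_apply hp.ne_zero (Nat.gcd_ne_zero_right hc),
      fact_gcd_apply hτ' hc, fact_prime_apply hp]
  rw [fact_gcd_apply hτp hc, e2, fact_mul_prime_apply hp hτ']
  rcases eq_or_ne p q with rfl | hqp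
  · rw [if_pos rfl]
    rw [hMp] at h
    omega
  · rw [if_neg hqp]
    omega

theorem prod_sub_prod_dvd {ι : Type*} {R : Type*} [CommRing R] (F : Finset ι) (a b : ι → R)
    {d : R} (h : ∀ i ∈ F, d ∣ a i - b i) : d ∣ (∏ i ∈ F, a i) - ∏ i ∈ F, b i := by
  classical
  induction F using Finset.induction with
  | empty => simp
  | insert x F' hx ih =>
    rw [Finset.prod_insert hx, Finset.prod_insert hx]
    have e : a x * ∏ i ∈ F', a i - b x * ∏ i ∈ F', b i
        = (a x - b x) * ∏ i ∈ F', a i + b x * ((∏ i ∈ F', a i) - ∏ i ∈ F', b i) := by ring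
    rw [e]
    exact dvd_add ((h x (Finset.mem_insert_self _ _)).mul_right _)
      ((ih (fun i hi => h i (Finset.mem_insert_of_mem hi))).mul_left _)

end GcdFact

section XCong

open MvPolynomial

variable {S : Type*} [PartialOrder S] {νS : S → ℕ} (hS : IsTPNorm νS)
include hS

theorem ghost_X_cong {p : ℕ} (hp : p.Prime) {s' s : S} (hle : s' ≤ s)
    (hmul : νS s' * p = νS s) :
    (p : MvPolynomial S ℤ) ^ ((νS s).factorization p) ∣
      ghost νS (fun u => (X u : MvPolynomial S ℤ)) s
        - frob p (ghost νS (fun u => (X u : MvPolynomial S ℤ)) s') := by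
  classical
  rw [ghost_eq_sum hS, ghost_eq_sum hS, map_sum]
  have hsub : (down_finite hS s').toFinset ⊆ (down_finite hS s).toFinset := by
    intro u hu
    rw [Set.Finite.mem_toFinset] at *
    exact hu.trans hle
  have hterm : ∀ u ∈ (down_finite hS s').toFinset,
      frob p ((νS u : MvPolynomial S ℤ) * (X u : MvPolynomial S ℤ) ^ (νS s' / νS u))
        = (νS u : MvPolynomial S ℤ) * (X u : MvPolynomial S ℤ) ^ (νS s / νS u) := by
    intro u hu
    rw [Set.Finite.mem_toFinset] at hu
    obtain ⟨q, hq⟩ := dvd_of_le hS hu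
    have hupos : 0 < νS u := npos hS u
    have e1 : νS s' / νS u = q := by rw [hq]; exact Nat.mul_div_cancel_left _ hupos
    have e2 : νS s / νS u = q * p := by
      rw [← hmul, hq, mul_assoc]; exact Nat.mul_div_cancel_left _ hupos
    rw [map_mul, map_natCast, map_pow, frob_X, e1, e2, ← pow_mul, mul_comm p q]
  rw [Finset.sum_congr rfl hterm, ← Finset.sum_sdiff hsub, add_sub_cancel_right]
  apply Finset.dvd_sum
  intro u hu
  rw [Finset.mem_sdiff, Set.Finite.mem_toFinset, Set.Finite.mem_toFinset] at hu
  obtain ⟨hule, hnot⟩ := hu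
  have hnd : ¬ νS u ∣ νS s' := fun hd => hnot (down_le hS hule hle hd)
  have hppow := prime_pow_dvd_of_not_dvd hp hmul (npos hS s') (dvd_of_le hS hule) hnd
  have h1 := Nat.cast_dvd_cast (α := MvPolynomial S ℤ) hppow
  rw [Nat.cast_pow] at h1
  exact h1.mul_right _

end XCong

section NmCong

open MvPolynomial

variable {S T : Type*} [PartialOrder S] [PartialOrder T] {νS : S → ℕ} {νT : T → ℕ} {f : S → T}

theorem nm_cong (hS : IsTPNorm νS) (hT : IsTPNorm νT) (hf : IsNMap νS νT f)
    {p : ℕ} (hp : p.Prime) {tp t : T} (hle : tp ≤ t) (hmul : νT tp * p = νT t) :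
    (p : MvPolynomial S ℤ) ^ ((νT t).factorization p) ∣
      nmGhost νS νT f (ghost νS (fun u => (X u : MvPolynomial S ℤ))) t
        - frob p (nmGhost νS νT f (ghost νS (fun u => (X u : MvPolynomial S ℤ))) tp) := by
  classical
  set G : S → MvPolynomial S ℤ := ghost νS (fun u => (X u : MvPolynomial S ℤ)) with hG
  have h1 : nmGhost νS νT f G t = ∏ s ∈ (hf.2.2 t).toFinset, G s ^ (νT t / νS s) :=
    finprod_mem_eq_finite_toFinset_prod _ (hf.2.2 t)
  have h2 : frob p (nmGhost νS νT f G tp)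
      = ∏ s ∈ (hf.2.2 tp).toFinset, (frob p (G s)) ^ (νT tp / νS s) := by
    have e := finprod_mem_eq_finite_toFinset_prod
      (fun s => G s ^ (νT tp / νS s)) (hf.2.2 tp)
    calc frob p (nmGhost νS νT f G tp)
        = frob p (∏ s ∈ (hf.2.2 tp).toFinset, G s ^ (νT tp / νS s)) := by
          rw [← e]; rfl
      _ = _ := by
          rw [map_prod]
          exact Finset.prod_congr rfl fun s _ => by rw [map_pow]
  have hρex : ∀ s, s ∈ hatPreim f t → ∃ s', s' ≤ s ∧ s' ∈ hatPreim f tp :=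
    fun s hs => hat_down hS hT hf.1 hle hs
  set ρ : S → S := fun s => if hs : s ∈ hatPreim f t then (hρex s hs).choose else s with hρ
  have hρspec : ∀ s (hs : s ∈ hatPreim f t), ρ s ≤ s ∧ ρ s ∈ hatPreim f tp := by
    intro s hs
    rw [hρ]
    simp only [dif_pos hs]
    exact (hρex s hs).choose_spec
  have h3 : ∏ s' ∈ (hf.2.2 tp).toFinset, (frob p (G s')) ^ (νT tp / νS s')
      = ∏ s ∈ (hf.2.2 t).toFinset, (frob p (G (ρ s))) ^ (νT tp / νS (ρ s)) := by
    symm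
    apply Finset.prod_bij (i := fun s _ => ρ s)
    · intro a ha
      rw [Set.Finite.mem_toFinset] at ha
      rw [Set.Finite.mem_toFinset]
      exact (hρspec a ha).2
    · intro a1 ha1 a2 ha2 he
      rw [Set.Finite.mem_toFinset] at ha1 ha2
      obtain ⟨i0, hi0, h10⟩ := exists_min hS (ρ a1)
      have hcomp : SameComp νS a1 a2 := by
        refine ⟨i0, h10, hi0.trans (hρspec a1 ha1).1, ?_⟩
        rw [he] at hi0
        exact hi0.trans (hρspec a2 ha2).1
      exact hat_comp_unique hS hT hf.1 ha1 ha2 hcomp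
    · intro s' hs'
      rw [Set.Finite.mem_toFinset] at hs'
      obtain ⟨s, hs'le, hsmem⟩ := hat_up hS hT hf.1 hf hle hs'
      refine ⟨s, by rw [Set.Finite.mem_toFinset]; exact hsmem, ?_⟩
      obtain ⟨j, hjs, hj1⟩ := exists_min hS s
      have hcomp : SameComp νS (ρ s) s' := by
        refine ⟨j, hj1, down_le hS hjs (hρspec s hsmem).1 (by rw [hj1]; exact one_dvd _),
          down_le hS hjs hs'le (by rw [hj1]; exact one_dvd _)⟩
      exact hat_comp_unique hS hT hf.1 (hρspec s hsmem).2 hs' hcomp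
    · intro a ha; rfl
  rw [h1, h2, h3]
  apply prod_sub_prod_dvd
  intro s hsAt
  rw [Set.Finite.mem_toFinset] at hsAt
  obtain ⟨hρle, hρmem⟩ := hρspec s hsAt
  set s' := ρ s with hs'def
  obtain ⟨i0, hi0s, hi01⟩ := exists_min hS s
  have hi0s' : i0 ≤ s' := down_le hS hi0s hρle (by rw [hi01]; exact one_dvd _)
  have et := hat_norm hS hT hf.1 hsAt hi0s hi01
  have etp := hat_norm hS hT hf.1 hρmem hi0s' hi01
  set m := (νT t).factorization p with hm
  set τ := νT t with hτ
  set τ' := νT tp with hτ'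
  set c₀ := νT (f i0) with hc₀
  set a := νS s with ha_def
  set a' := νS s' with ha'_def
  set g := Nat.gcd τ c₀ with hg_def
  set g' := Nat.gcd τ' c₀ with hg'_def
  have hτpos : 0 < τ := npos hT t
  have hτ'pos : 0 < τ' := npos hT tp
  have hapos : 0 < a := npos hS s
  have ha'pos : 0 < a' := npos hS s'
  have hc₀pos : 0 < c₀ := npos hT (f i0)
  have hgpos : 0 < g := Nat.gcd_pos_of_pos_left _ hτpos
  have hg'pos : 0 < g' := Nat.gcd_pos_of_pos_left _ hτ'pos
  have he1 : τ / a = g := Nat.div_eq_of_eq_mul_left hapos (by rw [← et]; ring)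
  have he2 : τ' / a' = g' := Nat.div_eq_of_eq_mul_left ha'pos (by rw [← etp]; ring)
  rw [he1, he2]
  have hfg : a.factorization p + g.factorization p = m := by
    rw [hm, ← et, fact_mul_apply hapos.ne' hgpos.ne']
  have hm1 : τ'.factorization p + 1 = m := by
    rw [hm, ← hmul, fact_mul_prime_apply hp hτ'pos.ne', if_pos rfl]
  rcases Nat.eq_zero_or_pos (a.factorization p) with has | has
  · -- case A : p does not divide νS s
    have hvg : g.factorization p = m := by omega
    have hpm_g : p ^ m ∣ g := by rw [← hvg]; exact Nat.ordProj_dvd g p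
    have hpm_c : p ^ m ∣ c₀ := hpm_g.trans (Nat.gcd_dvd_right τ c₀)
    have hcge : (τ' * p).factorization p ≤ c₀.factorization p := by
      have hA : (τ' * p).factorization p = τ.factorization p := by rw [hmul]
      have hB : m ≤ c₀.factorization p :=
        (Nat.Prime.pow_dvd_iff_le_factorization hp hc₀pos.ne').mp hpm_c
      omega
    have hgg' : g = p * g' := by
      rw [hg_def, hg'_def, ← hmul]
      exact gcd_pow_succ hp hτ'pos.ne' hc₀pos.ne' hcge
    have ha'a : a' = a := by
      have hX : a * g = a' * g := by
        rw [et, ← hmul, ← etp, hgg']; ring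
      exact (Nat.eq_of_mul_eq_mul_right hgpos hX).symm
    have hs'eq : s' = s := eq_of_sameComp_norm_eq hS ⟨i0, hi01, hi0s', hi0s⟩ ha'a
    rw [hs'eq]
    have hfb : (p : MvPolynomial S ℤ) ^ 1 ∣ (G s) ^ p - frob p (G s) := by
      rw [pow_one]
      exact dvd_sub_comm.mp (frob_sub_pow p hp (G s))
    have hg'f : g'.factorization p = m - 1 := by
      have h3' := fact_gcd_apply (a := τ') (b := c₀) (p := p) hτ'pos.ne' hc₀pos.ne'
      rw [← hg'_def] at h3'
      have hB : m ≤ c₀.factorization p :=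
        (Nat.Prime.pow_dvd_iff_le_factorization hp hc₀pos.ne').mp hpm_c
      omega
    have hk : p ^ (m - 1) ∣ g' := by
      rw [show m - 1 = g'.factorization p by omega]
      exact Nat.ordProj_dvd g' p
    have hpow := pow_cong' hp le_rfl hfb hk
    rw [← pow_mul, show (1 : ℕ) + (m - 1) = m by omega, ← hgg'] at hpow
    exact hpow
  · -- case B : p divides νS s
    have h3' := fact_gcd_apply (a := τ) (b := c₀) (p := p) hτpos.ne' hc₀pos.ne'
    rw [← hg_def] at h3'
    have hτm : τ.factorization p = m := hm.symm
    have hcm : c₀.factorization p < m := by omega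
    have hgg' : g = g' := by
      rw [hg_def, hg'_def, ← hmul]
      refine gcd_pow_eq hp hτ'pos.ne' hc₀pos.ne' ?_
      have hA : (τ' * p).factorization p = τ.factorization p := by rw [hmul]
      omega
    have haa' : a' * p = a := by
      have hX : a * g = a' * p * g := by
        rw [et, ← hmul, ← etp, hgg']; ring
      exact (Nat.eq_of_mul_eq_mul_right hgpos hX).symm
    have hXc := ghost_X_cong hS hp hρle haa'
    have hk : p ^ (m - a.factorization p) ∣ g := by
      rw [show m - a.factorization p = g.factorization p by omega]
      exact Nat.ordProj_dvd g p
    have hpow := pow_cong' hp has hXc hk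
    rw [show a.factorization p + (m - a.factorization p) = m by omega] at hpow
    rw [← hgg']
    exact hpow

end NmCong

section NmMap

variable {S T : Type*} [PartialOrder S] [PartialOrder T] {νS : S → ℕ} {νT : T → ℕ} {f : S → T}

theorem nmGhost_map (hfin : ∀ t : T, (hatPreim f t).Finite) {k k' : Type*} [CommRing k]
    [CommRing k'] (g : k →+* k') (x : S → k) (t : T) :
    nmGhost νS νT f (fun s => g (x s)) t = g (nmGhost νS νT f x t) := by
  calc nmGhost νS νT f (fun s => g (x s)) t
      = ∏ s ∈ (hfin t).toFinset, (g (x s)) ^ (νT t / νS s) :=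
        finprod_mem_eq_finite_toFinset_prod _ (hfin t)
    _ = g (∏ s ∈ (hfin t).toFinset, (x s) ^ (νT t / νS s)) := by
        rw [map_prod]
        exact Finset.prod_congr rfl fun s _ => (map_pow g _ _).symm
    _ = g (nmGhost νS νT f x t) := by
        rw [← finprod_mem_eq_finite_toFinset_prod
          (fun s => (x s) ^ (νT t / νS s)) (hfin t)]
        rfl

theorem aeval_natural {k₁ k₂ : Type*} [CommRing k₁] [CommRing k₂] (g : k₁ →+* k₂)
    (a : S → k₁) (r : MvPolynomial S ℤ) :
    MvPolynomial.aeval (fun s => g (a s)) r = g (MvPolynomial.aeval a r) := by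
  have h : ((MvPolynomial.aeval (fun s => g (a s))).toRingHom : MvPolynomial S ℤ →+* k₂)
      = g.comp (MvPolynomial.aeval a).toRingHom := by
    apply MvPolynomial.ringHom_ext
    · intro z
      simp [MvPolynomial.aeval_C, map_intCast, eq_intCast]
    · intro s
      simp
  exact RingHom.congr_fun h r

end NmMap

end TPAux

/-- Existence and uniqueness of the multiplicative norm `f_⊗` induced by an N-map
`f : S → T`: on ghost coordinates it is `(x_s) ↦ (Π_{s ∈ f^{-hat}(t)} x_s^{|t|/|s|})`,
it lifts to Witt coordinates, and the lift is unique among maps natural in `k`. -/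
theorem stmt12 {S T : Type} [PartialOrder S] [PartialOrder T]
    (νS : S → ℕ) (νT : T → ℕ) (hS : TP.IsTPNorm νS) (hT : TP.IsTPNorm νT)
    (f : S → T) (hf : TP.IsNMap νS νT f) :
    (∀ (k : Type) [CommRing k], ∀ a : S → k,
        ∃ b : T → k, TP.ghost νT b = nmGhost νS νT f (TP.ghost νS a)) ∧
    ∃! F : ∀ (k : Type) [CommRing k], (S → k) → (T → k),
      (∀ (k : Type) [CommRing k], ∀ a : S → k,
        TP.ghost νT (F k a) = nmGhost νS νT f (TP.ghost νS a)) ∧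
      (∀ (k₁ k₂ : Type) [CommRing k₁] [CommRing k₂], ∀ (g : k₁ →+* k₂) (a : S → k₁),
        F k₂ (fun s => g (a s)) = fun t => g (F k₁ a t)) := by
  classical
  open TPAux MvPolynomial in
  obtain ⟨b, hb⟩ := TPAux.dwork_exists hT
    (nmGhost νS νT f (TP.ghost νS (fun u => (MvPolynomial.X u : MvPolynomial S ℤ))))
    (fun p hp tp t h1 h2 => TPAux.nm_cong hS hT hf hp h1 h2)
  -- the key ghost computation for specializations of `b`
  have key : ∀ (k : Type) [CommRing k] (a : S → k) (gh : MvPolynomial S ℤ →+* k),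
      (∀ s, gh (MvPolynomial.X s) = a s) →
      TP.ghost νT (fun t => gh (b t)) = nmGhost νS νT f (TP.ghost νS a) := by
    intro k _ a gh hgh
    funext t
    calc TP.ghost νT (fun u => gh (b u)) t
        = gh (TP.ghost νT b t) := TPAux.ghost_map hT gh b t
      _ = gh (nmGhost νS νT f
            (TP.ghost νS (fun u => (MvPolynomial.X u : MvPolynomial S ℤ))) t) := by
          rw [hb t]
      _ = nmGhost νS νT f (fun s => gh
            (TP.ghost νS (fun u => (MvPolynomial.X u : MvPolynomial S ℤ)) s)) t :=
          (TPAux.nmGhost_map hf.2.2 gh _ t).symm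
      _ = nmGhost νS νT f (TP.ghost νS a) t := by
          have e : (fun s => gh
              (TP.ghost νS (fun u => (MvPolynomial.X u : MvPolynomial S ℤ)) s))
              = TP.ghost νS a := by
            funext s
            rw [← TPAux.ghost_map hS gh (fun u => (MvPolynomial.X u : MvPolynomial S ℤ)) s]
            have e2 : (fun u => gh (MvPolynomial.X u)) = a := funext hgh
            rw [e2]
          rw [e]
  have keyA : ∀ (k : Type) [CommRing k] (a : S → k),
      TP.ghost νT (fun t => MvPolynomial.aeval a (b t)) = nmGhost νS νT f (TP.ghost νS a) := by
    intro k _ a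
    exact key k a ((MvPolynomial.aeval a).toRingHom : MvPolynomial S ℤ →+* k)
      (fun s => by simp)
  refine ⟨fun k _ a => ⟨fun t => MvPolynomial.aeval a (b t), keyA k a⟩, ?_⟩
  refine ⟨fun k _ a t => MvPolynomial.aeval a (b t), ⟨fun k _ a => keyA k a, ?_⟩, ?_⟩
  · -- naturality of our F
    intro k₁ k₂ _ _ g a
    funext t
    exact TPAux.aeval_natural g a (b t)
  · -- uniqueness
    rintro F' ⟨hg', hnat'⟩
    funext k inst a t
    -- F' at the universal point agrees with aeval _ b
    have huniv : ∀ u : T, F' (MvPolynomial S ℤ)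
        (fun s => (MvPolynomial.X s : MvPolynomial S ℤ)) u = b u := by
      intro u
      have hgh : TP.ghost νT (F' (MvPolynomial S ℤ)
          (fun s => (MvPolynomial.X s : MvPolynomial S ℤ)))
          = TP.ghost νT b := by
        rw [hg' (MvPolynomial S ℤ) (fun s => (MvPolynomial.X s : MvPolynomial S ℤ))]
        funext w
        rw [hb w]
      exact TPAux.ghost_unique hT (t0 := u) (fun x _ => congrFun hgh x) u le_rfl
    have hnatu := hnat' (MvPolynomial S ℤ) k
      ((MvPolynomial.aeval a).toRingHom : MvPolynomial S ℤ →+* k)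
      (fun s => (MvPolynomial.X s : MvPolynomial S ℤ))
    have hXa : (fun s => ((MvPolynomial.aeval a).toRingHom : MvPolynomial S ℤ →+* k)
        (MvPolynomial.X s)) = a := by
      funext s; simp
    rw [hXa] at hnatu
    calc F' k a t
        = (MvPolynomial.aeval a) (F' (MvPolynomial S ℤ)
            (fun s => (MvPolynomial.X s : MvPolynomial S ℤ)) t) := by
          rw [hnatu]
          rfl
      _ = MvPolynomial.aeval a (b t) := by rw [huniv t]
end

section
/- Additive-pullback commutation on ghost coordinates: Let f : S → A be a T-map and g : T → A an R-map of truncation posets. Define f*_⊕T = { (s, t, ξ) : f(s) = g(t), ξ ∈ C_m } where m = gcd(|f(s)|/|s|, |g(t)|/|t|) and C_m is a cyclic group of order m, with norm |(s,t,ξ)| = gcd(|s|,|t|). Then for any commutative ring k and any ⟨x_s⟩ ∈ k^S, the t-th coordinate of the composite g*_w ∘ f^w_⊕ applied to ⟨x_s⟩, namely Σ_{s : f(s) = g(t)} (|g(t)|/|s|)·x_s, equals Σ_{(s,t,ξ) ∈ f*_⊕T} (|t|/gcd(|s|,|t|))·x_s (sum over triples with second coordinate t). In particular, for each s with f(s)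 = g(t), we have |g(t)|/|s| = (|t|/gcd(|s|,|t|))·gcd(|f(s)|/|s|, |g(t)|/|t|). -/
private lemma norm_dvd_aux {S A : Type*} [PartialOrder S] [PartialOrder A]
    (νS : S → ℕ) (νA : A → ℕ) (hS : TP.IsTPNorm νS) (hA : TP.IsTPNorm νA)
    (f : S → A) (hf : TP.IsTPMap νS νA f) (s : S) :
    ∃ e : ℕ, 0 < e ∧ νA (f s) = e * νS s := by
  obtain ⟨u, ⟨hus, hu⟩, -⟩ := hS.2.2.2.1 s (νS s) dvd_rfl
  have hu1 : νS u = 1 := by rw [hu, Nat.div_self (hS.1 s)]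
  obtain ⟨hfu, hratio⟩ := hf u s hus
  have hdvd : νA (f u) ∣ νA (f s) := hA.2.1 _ _ hfu
  refine ⟨νA (f u), hA.1 _, ?_⟩
  have : νA (f s) / νA (f u) = νS s := by rw [hratio, hu1, Nat.div_one]
  rw [← this, Nat.mul_div_cancel' hdvd]

private lemma key_arith (a b c : ℕ) (ha : 0 < a) (hac : a ∣ c) (hbc : b ∣ c) :
    c / a = (b / Nat.gcd a b) * Nat.gcd (c / a) (c / b) := by
  rcases Nat.eq_zero_or_pos b with hb | hb
  · subst hb; simp [Nat.eq_zero_of_zero_dvd hbc]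
  obtain ⟨e, he⟩ : Nat.lcm a b ∣ c := Nat.lcm_dvd hac hbc
  set d := Nat.gcd a b with hd
  have hdpos : 0 < d := Nat.gcd_pos_of_pos_left _ ha
  have hda : d ∣ a := Nat.gcd_dvd_left a b
  have hdb : d ∣ b := Nat.gcd_dvd_right a b
  have hlcm1 : Nat.lcm a b = a * (b / d) := by
    rw [Nat.lcm, ← hd, Nat.mul_div_assoc a hdb]
  have hlcm2 : Nat.lcm a b = b * (a / d) := by
    rw [Nat.lcm_comm, Nat.lcm, Nat.gcd_comm, ← hd, Nat.mul_div_assoc b hda]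
  have hca : c / a = (b / d) * e := by
    rw [he, hlcm1, mul_assoc, Nat.mul_div_cancel_left _ ha]
  have hcb : c / b = (a / d) * e := by
    rw [he, hlcm2, mul_assoc, Nat.mul_div_cancel_left _ hb]
  have hcop : Nat.gcd (b / d) (a / d) = 1 := by
    rw [Nat.gcd_comm]; exact Nat.coprime_div_gcd_div_gcd hdpos
  rw [hca, hcb, Nat.gcd_mul_right, hcop, one_mul]

/-- Additive-pullback commutation on ghost coordinates: for a T-map `f : S → A` and an
R-map `g : T → A`, the `t`-coordinate of `g* ∘ f_⊕` on ghost coordinates equals the sum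
over the additive pullback `f*_⊕T = {(s,ξ) | f s = g t, ξ ∈ C_m}` of the coefficients
`|t|/gcd(|s|,|t|)`, where `m = gcd(|f s|/|s|, |g t|/|t|)`; in particular
`|g t|/|s| = (|t|/gcd(|s|,|t|))·gcd(|f s|/|s|, |g t|/|t|)`. -/
theorem stmt13 {S T A : Type*} [PartialOrder S] [PartialOrder T] [PartialOrder A]
    (νS : S → ℕ) (νT : T → ℕ) (νA : A → ℕ)
    (hS : TP.IsTPNorm νS) (hT : TP.IsTPNorm νT) (hA : TP.IsTPNorm νA)
    (f : S → A) (g : T → A) (hf : TP.IsTMap νS νA f) (hg : TP.IsTPMap νT νA g)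
    {k : Type*} [CommRing k] (x : S → k) (t : T) :
    (∀ s : S, f s = g t →
      νA (g t) / νS s
        = (νT t / Nat.gcd (νS s) (νT t)) * Nat.gcd (νA (f s) / νS s) (νA (g t) / νT t)) ∧
    (∑ᶠ s ∈ {s : S | f s = g t}, ((νA (g t) / νS s : ℕ) : k) * x s)
      = ∑ᶠ p ∈ {p : Σ s : S, ZMod (Nat.gcd (νA (f s) / νS s) (νA (g t) / νT t)) |
            f p.1 = g t},
          ((νT t / Nat.gcd (νS p.1) (νT t) : ℕ) : k) * x p.1 := by
  classical
  -- divisibility facts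
  have hdS : ∀ s : S, ∃ e : ℕ, 0 < e ∧ νA (f s) = e * νS s :=
    norm_dvd_aux νS νA hS hA f hf.1
  have hdT : ∃ e : ℕ, 0 < e ∧ νA (g t) = e * νT t :=
    norm_dvd_aux νT νA hT hA g hg t
  set m : S → ℕ := fun s => Nat.gcd (νA (f s) / νS s) (νA (g t) / νT t) with hm
  have hmpos : ∀ s : S, 0 < m s := by
    intro s
    obtain ⟨e, he, heq⟩ := hdS s
    have : νA (f s) / νS s = e := by rw [heq, Nat.mul_div_cancel _ (hS.1 s)]
    exact Nat.gcd_pos_of_pos_left _ (this ▸ he)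
  have part1 : ∀ s : S, f s = g t →
      νA (g t) / νS s
        = (νT t / Nat.gcd (νS s) (νT t)) * Nat.gcd (νA (f s) / νS s) (νA (g t) / νT t) := by
    intro s hs
    rw [hs]
    obtain ⟨e, _, heq⟩ := hdS s
    have hac : νS s ∣ νA (g t) := by exact ⟨e, by rw [← hs, heq, mul_comm]⟩
    obtain ⟨e', _, heq'⟩ := hdT
    have hbc : νT t ∣ νA (g t) := by exact ⟨e', by rw [heq', mul_comm]⟩
    exact key_arith _ _ _ (hS.1 s) hac hbc
  refine ⟨part1, ?_⟩
  -- finiteness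
  have hfin : ({s : S | f s = g t}).Finite := hf.2.2 (g t)
  set Fs : Finset S := hfin.toFinset with hFs
  have hmemFs : ∀ s : S, s ∈ Fs ↔ f s = g t := by
    intro s; rw [hFs, Set.Finite.mem_toFinset]; rfl
  haveI : ∀ s : S, NeZero (m s) := fun s => ⟨(hmpos s).ne'⟩
  letI instF : ∀ s : S, Fintype (ZMod (m s)) := fun s => ZMod.fintype _
  set Pfin : Finset (Σ s : S, ZMod (m s)) := Fs.sigma (fun s => Finset.univ) with hPfin
  have hcoe : (↑Pfin : Set (Σ s : S, ZMod (m s)))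
      = {p : Σ s : S, ZMod (m s) | f p.1 = g t} := by
    ext p
    simp [hPfin, Finset.mem_sigma, hmemFs]
  calc (∑ᶠ s ∈ {s : S | f s = g t}, ((νA (g t) / νS s : ℕ) : k) * x s)
      = ∑ s ∈ Fs, ((νA (g t) / νS s : ℕ) : k) * x s := by
        exact finsum_mem_eq_finite_toFinset_sum _ hfin
    _ = ∑ s ∈ Fs, ∑ _ξ : ZMod (m s), ((νT t / Nat.gcd (νS s) (νT t) : ℕ) : k) * x s := by
        refine Finset.sum_congr rfl ?_
        intro s hs
        rw [Finset.sum_const, Finset.card_univ, ZMod.card (m s), part1 s ((hmemFs s).1 hs)]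
        push_cast
        ring
    _ = ∑ p ∈ Pfin, ((νT t / Nat.gcd (νS p.1) (νT t) : ℕ) : k) * x p.1 := by
        rw [hPfin, Finset.sum_sigma]
    _ = ∑ᶠ p ∈ {p : Σ s : S, ZMod (Nat.gcd (νA (f s) / νS s) (νA (g t) / νT t)) |
            f p.1 = g t},
          ((νT t / Nat.gcd (νS p.1) (νT t) : ℕ) : k) * x p.1 := by
        rw [← finsum_mem_coe_finset, hcoe]
end

section
/- The additive pullback is a truncation poset with the expected legs: given a T-map f : S → A and an R-map g : T → A of truncation posets, the set f*_⊕T = { (s,t,ξ) : f(s) = g(t), ξ ∈ C_m } with m = gcd(|f(s)|/|s|, |g(t)|/|t|), norm |(s,t,ξ)| = gcd(|s|,|t|), and order (s₁,t₁,ξ₁) | (s₂,t₂,ξ₂) iff s₁|s₂, t₁|t₂ and ξ₁ = ξ₂ (under the canonical identification of the cyclic groups), is a truncation poset; the projection g' : f*_⊕T → S, (s,t,ξ) ↦ s is an R-map; and the projection f' : f*_⊕T → T, (s,t,ξ) ↦ t is a T-map. -/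
/-- The additive pullback of a T-map `f : S → A` along an R-map `g : T → A`:
triples `(s, t, ξ)` with `f s = g t` and `ξ ∈ C_m`, `m = gcd(|f s|/|s|, |g t|/|t|)`. -/
def AddPB {S T A : Type*} [PartialOrder S] [PartialOrder T] [PartialOrder A]
    (νS : S → ℕ) (νT : T → ℕ) (νA : A → ℕ) (f : S → A) (g : T → A) : Type _ :=
  {p : S × T × ℕ // f p.1 = g p.2.1 ∧
    p.2.2 < Nat.gcd (νA (f p.1) / νS p.1) (νA (g p.2.1) / νT p.2.1)}

instance {S T A : Type*} [PartialOrder S] [PartialOrder T] [PartialOrder A]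
    (νS : S → ℕ) (νT : T → ℕ) (νA : A → ℕ) (f : S → A) (g : T → A) :
    PartialOrder (AddPB νS νT νA f g) where
  le p q := p.1.1 ≤ q.1.1 ∧ p.1.2.1 ≤ q.1.2.1 ∧ p.1.2.2 = q.1.2.2
  le_refl p := ⟨le_refl _, le_refl _, rfl⟩
  le_trans p q r h h' := ⟨h.1.trans h'.1, h.2.1.trans h'.2.1, h.2.2.trans h'.2.2⟩
  le_antisymm p q h h' := by
    apply Subtype.ext
    exact Prod.ext (le_antisymm h.1 h'.1) (Prod.ext (le_antisymm h.2.1 h'.2.1) h.2.2)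

/-- The additive pullback `f*_⊕T`, with norm `|(s,t,ξ)| = gcd(|s|,|t|)` and
componentwise order, is a truncation poset; the projection to `S` is an R-map and the
projection to `T` is a T-map. -/
theorem stmt14 {S T A : Type*} [PartialOrder S] [PartialOrder T] [PartialOrder A]
    (νS : S → ℕ) (νT : T → ℕ) (νA : A → ℕ)
    (hS : TP.IsTPNorm νS) (hT : TP.IsTPNorm νT) (hA : TP.IsTPNorm νA)
    (f : S → A) (g : T → A) (hf : TP.IsTMap νS νA f) (hg : TP.IsTPMap νT νA g) :
    TP.IsTPNorm (fun p : AddPB νS νT νA f g => Nat.gcd (νS p.1.1) (νT p.1.2.1)) ∧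
    TP.IsTPMap (fun p : AddPB νS νT νA f g => Nat.gcd (νS p.1.1) (νT p.1.2.1)) νS
      (fun p => p.1.1) ∧
    TP.IsTMap (fun p : AddPB νS νT νA f g => Nat.gcd (νS p.1.1) (νT p.1.2.1)) νT
      (fun p => p.1.2.1) := by
  obtain ⟨hS1, hS2, hS3, hS4, hS5⟩ := hS
  obtain ⟨hT1, hT2, hT3, hT4, hT5⟩ := hT
  obtain ⟨hA1, hA2, hA3, hA4, hA5⟩ := hA
  obtain ⟨hfm, hffib, hffin⟩ := hf
  set P := AddPB νS νT νA f g with hP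
  set νP : P → ℕ := fun p => Nat.gcd (νS p.1.1) (νT p.1.2.1) with hνP
  -- key lemma: common ratio
  have key : ∀ p q : P, p ≤ q →
      νS q.1.1 = (νS q.1.1 / νS p.1.1) * νS p.1.1 ∧
      νT q.1.2.1 = (νS q.1.1 / νS p.1.1) * νT p.1.2.1 := by
    rintro p q ⟨h1, h2, h3⟩
    have hd1 : νS p.1.1 ∣ νS q.1.1 := hS2 _ _ h1
    have hd2 : νT p.1.2.1 ∣ νT q.1.2.1 := hT2 _ _ h2
    have e1 : νA (f q.1.1) / νA (f p.1.1) = νS q.1.1 / νS p.1.1 := (hfm _ _ h1).2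
    have e2 : νA (g q.1.2.1) / νA (g p.1.2.1) = νT q.1.2.1 / νT p.1.2.1 := (hg _ _ h2).2
    have hrr : νS q.1.1 / νS p.1.1 = νT q.1.2.1 / νT p.1.2.1 := by
      rw [← e1, ← e2, p.2.1, q.2.1]
    refine ⟨(Nat.div_mul_cancel hd1).symm, ?_⟩
    rw [hrr]; exact (Nat.div_mul_cancel hd2).symm
  have hPpos : ∀ p : P, 0 < νP p := fun p => Nat.gcd_pos_of_pos_left _ (hS1 _)
  have keyg : ∀ p q : P, p ≤ q → νP q = (νS q.1.1 / νS p.1.1) * νP p := by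
    intro p q h
    obtain ⟨e1, e2⟩ := key p q h
    simp only [hνP]
    conv_lhs => rw [e1, e2]
    rw [Nat.gcd_mul_left]
  have keyr : ∀ p q : P, p ≤ q → νP q / νP p = νS q.1.1 / νS p.1.1 := by
    intro p q h
    rw [keyg p q h, Nat.mul_div_cancel _ (hPpos p)]
  have keyt : ∀ p q : P, p ≤ q → νT q.1.2.1 / νT p.1.2.1 = νS q.1.1 / νS p.1.1 := by
    intro p q h
    conv_lhs => rw [(key p q h).2]
    rw [Nat.mul_div_cancel _ (hT1 _)]
  refine ⟨⟨hPpos, ?_, ?_, ?_, ?_⟩, ?_, ⟨?_, ?_, ?_⟩⟩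
  · -- divisibility of norms
    intro p q h
    exact Dvd.intro_left _ (keyg p q h).symm
  · -- multiplicativity
    intro p q u h1 h2
    have e1 := keyg p q h1
    have e2 := keyg q u h2
    rw [keyr q u h2, keyr p q h1, e2, e1, ← mul_assoc,
      Nat.mul_div_cancel _ (hPpos p)]
  · -- existence and uniqueness of division
    intro p d hd
    have hd1 : d ∣ νS p.1.1 := hd.trans (Nat.gcd_dvd_left _ _)
    have hd2 : d ∣ νT p.1.2.1 := hd.trans (Nat.gcd_dvd_right _ _)
    have hdpos : 0 < d := Nat.pos_of_dvd_of_pos hd1 (hS1 _)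
    obtain ⟨s', ⟨hs'le, hs'ν⟩, hs'u⟩ := hS4 p.1.1 d hd1
    obtain ⟨t', ⟨ht'le, ht'ν⟩, ht'u⟩ := hT4 p.1.2.1 d hd2
    -- νS p.1.1 = d * νS s'
    have eS : νS p.1.1 = d * νS s' := by
      rw [hs'ν, Nat.mul_div_cancel' hd1]
    have eT : νT p.1.2.1 = d * νT t' := by
      rw [ht'ν, Nat.mul_div_cancel' hd2]
    -- f-side norms
    have hfs' : f s' ≤ f p.1.1 := (hfm _ _ hs'le).1
    have hfr : νA (f p.1.1) / νA (f s') = d := by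
      rw [(hfm _ _ hs'le).2, hs'ν, Nat.div_div_self hd1 (hS1 p.1.1).ne']
    have hfdvd : νA (f s') ∣ νA (f p.1.1) := hA2 _ _ hfs'
    have eA : νA (f p.1.1) = d * νA (f s') := by
      rw [← hfr, Nat.div_mul_cancel hfdvd]
    have hgt' : g t' ≤ g p.1.2.1 := (hg _ _ ht'le).1
    have hgr : νA (g p.1.2.1) / νA (g t') = d := by
      rw [(hg _ _ ht'le).2, ht'ν, Nat.div_div_self hd2 (hT1 p.1.2.1).ne']
    have hgdvd : νA (g t') ∣ νA (g p.1.2.1) := hA2 _ _ hgt'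
    have eA' : νA (g p.1.2.1) = d * νA (g t') := by
      rw [← hgr, Nat.div_mul_cancel hgdvd]
    -- f s' = g t' by uniqueness in A
    have hAd : d ∣ νA (f p.1.1) := ⟨_, eA⟩
    obtain ⟨a, _, hau⟩ := hA4 (f p.1.1) d hAd
    have hfa : f s' = a := hau _ ⟨hfs', by rw [eA, Nat.mul_div_cancel_left _ hdpos]⟩
    have hga : g t' = a := hau _ ⟨by rw [p.2.1]; exact hgt',
      by rw [p.2.1, eA', Nat.mul_div_cancel_left _ hdpos]⟩
    have hfg : f s' = g t' := hfa.trans hga.symm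
    -- the gcd condition for the new element
    have hm1 : νA (f s') / νS s' = νA (f p.1.1) / νS p.1.1 := by
      rw [eA, eS, Nat.mul_div_mul_left _ _ hdpos]
    have hm2 : νA (g t') / νT t' = νA (g p.1.2.1) / νT p.1.2.1 := by
      rw [eA', eT, Nat.mul_div_mul_left _ _ hdpos]
    have hmem : f (s', t', p.1.2.2).1 = g (s', t', p.1.2.2).2.1 ∧
        (s', t', p.1.2.2).2.2 <
          Nat.gcd (νA (f (s', t', p.1.2.2).1) / νS (s', t', p.1.2.2).1)
            (νA (g (s', t', p.1.2.2).2.1) / νT (s', t', p.1.2.2).2.1) := by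
      refine ⟨hfg, ?_⟩
      simp only
      rw [hm1, hm2]
      exact p.2.2
    refine ⟨⟨(s', t', p.1.2.2), hmem⟩, ⟨⟨hs'le, ht'le, rfl⟩, ?_⟩, ?_⟩
    · -- norm is νP p / d
      show Nat.gcd (νS s') (νT t') = Nat.gcd (νS p.1.1) (νT p.1.2.1) / d
      rw [eS, eT, Nat.gcd_mul_left, Nat.mul_div_cancel_left _ hdpos]
    · -- uniqueness
      rintro q ⟨⟨h1, h2, h3⟩, hq⟩
      have hkey := key q p ⟨h1, h2, h3⟩
      set r := νS p.1.1 / νS q.1.1 with hr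
      have hg1 : νP p = r * νP q := keyg q p ⟨h1, h2, h3⟩
      have hq' : νP q = νP p / d := hq
      have hrd : r = d := by
        have h5 : νP p = d * (νP p / d) := (Nat.mul_div_cancel' hd).symm
        have h6 : νP p = r * (νP p / d) := by rw [← hq']; exact hg1
        have : r * (νP p / d) = d * (νP p / d) := by rw [← h6, ← h5]
        have hpos : 0 < νP p / d := Nat.div_pos (Nat.le_of_dvd (hPpos p) hd) hdpos
        exact Nat.eq_of_mul_eq_mul_right hpos this
      have hqs : νS q.1.1 = νS p.1.1 / d := by
        have := hkey.1
        rw [hrd] at this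
        rw [this, Nat.mul_div_cancel_left _ hdpos]
      have hqt : νT q.1.2.1 = νT p.1.2.1 / d := by
        have := hkey.2
        rw [hrd] at this
        rw [this, Nat.mul_div_cancel_left _ hdpos]
      have es : q.1.1 = s' := hs'u _ ⟨h1, hqs⟩
      have et : q.1.2.1 = t' := ht'u _ ⟨h2, hqt⟩
      exact Subtype.ext (Prod.ext es (Prod.ext et h3))
  · -- uniqueness of multiples
    rintro p q q' hpq hpq' hν
    have e1 := keyg p q hpq
    have e2 := keyg p q' hpq'
    have hr : νS q.1.1 / νS p.1.1 = νS q'.1.1 / νS p.1.1 := by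
      have : (νS q.1.1 / νS p.1.1) * νP p = (νS q'.1.1 / νS p.1.1) * νP p := by
        rw [← e1, ← e2]; exact hν
      exact Nat.eq_of_mul_eq_mul_right (hPpos p) this
    have hνs : νS q.1.1 = νS q'.1.1 := by
      rw [(key p q hpq).1, (key p q' hpq').1, hr]
    have hνt : νT q.1.2.1 = νT q'.1.2.1 := by
      rw [(key p q hpq).2, (key p q' hpq').2, hr]
    have es : q.1.1 = q'.1.1 := hS5 _ _ _ hpq.1 hpq'.1 hνs
    have et : q.1.2.1 = q'.1.2.1 := hT5 _ _ _ hpq.2.1 hpq'.2.1 hνt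
    exact Subtype.ext (Prod.ext es (Prod.ext et (hpq.2.2.symm.trans hpq'.2.2)))
  · -- projection to S is an R-map
    intro p q h
    exact ⟨h.1, (keyr p q h).symm ▸ (keyr p q h)⟩
  · -- projection to T is a TPMap
    intro p q h
    refine ⟨h.2.1, ?_⟩
    rw [keyt p q h, keyr p q h]
  · -- fibration
    rintro p t' hle
    have hgle : g p.1.2.1 ≤ g t' := (hg _ _ hle).1
    have hfle : f p.1.1 ≤ g t' := p.2.1 ▸ hgle
    obtain ⟨s', hs'le, hfs'⟩ := hffib p.1.1 (g t') hfle
    set r := νT t' / νT p.1.2.1 with hr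
    have hrA : νA (g t') = r * νA (g p.1.2.1) := by
      rw [hr, ← (hg _ _ hle).2, Nat.div_mul_cancel (hA2 _ _ hgle)]
    have hrpos : 0 < r := by
      rcases Nat.eq_zero_or_pos r with h0 | h0
      · exfalso; have := hA1 (g t'); rw [hrA, h0, zero_mul] at this; exact this.false
      · exact h0
    have hfdvd : νA (f p.1.1) ∣ νA (f s') := hA2 _ _ ((hfm _ _ hs'le).1)
    have hrS : νS s' = r * νS p.1.1 := by
      have e : νS s' / νS p.1.1 = r := by
        rw [← (hfm _ _ hs'le).2, hfs', p.2.1, hrA,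
          Nat.mul_div_cancel _ (hA1 (g p.1.2.1))]
      rw [← e, Nat.div_mul_cancel (hS2 _ _ hs'le)]
    have hm1 : νA (f s') / νS s' = νA (f p.1.1) / νS p.1.1 := by
      rw [hfs', p.2.1, hrA, hrS, Nat.mul_div_mul_left _ _ hrpos]
    have hrT : νT t' = r * νT p.1.2.1 := by
      rw [hr, Nat.div_mul_cancel (hT2 _ _ hle)]
    have hm2 : νA (g t') / νT t' = νA (g p.1.2.1) / νT p.1.2.1 := by
      rw [hrA, hrT, Nat.mul_div_mul_left _ _ hrpos]
    have hmem : f (s', t', p.1.2.2).1 = g (s', t', p.1.2.2).2.1 ∧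
        (s', t', p.1.2.2).2.2 <
          Nat.gcd (νA (f (s', t', p.1.2.2).1) / νS (s', t', p.1.2.2).1)
            (νA (g (s', t', p.1.2.2).2.1) / νT (s', t', p.1.2.2).2.1) := by
      refine ⟨hfs', ?_⟩
      simp only
      rw [hm1, hm2]
      exact p.2.2
    exact ⟨⟨(s', t', p.1.2.2), hmem⟩, ⟨hs'le, hle, rfl⟩, rfl⟩
  · -- finite fibers
    intro t
    set F : Set P := (fun p : P => p.1.2.1) ⁻¹' {t} with hF
    have hinj : Set.InjOn (fun p : P => (p.1.1, p.1.2.2)) F := by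
      rintro p hp q hq hpq
      simp only [Prod.mk.injEq] at hpq
      obtain ⟨h1, h3⟩ := hpq
      have h2 : p.1.2.1 = q.1.2.1 := by
        have hp' : p.1.2.1 = t := hp
        have hq' : q.1.2.1 = t := hq
        rw [hp', hq']
      exact Subtype.ext (Prod.ext h1 (Prod.ext h2 h3))
    have himg : (fun p : P => (p.1.1, p.1.2.2)) '' F ⊆
        (f ⁻¹' {g t}) ×ˢ Set.Iic (νA (g t)) := by
      rintro ⟨s, ξ⟩ ⟨p, hp, hpe⟩
      have hpt : p.1.2.1 = t := hp
      simp only [Prod.mk.injEq] at hpe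
      obtain ⟨hs, hξ⟩ := hpe
      constructor
      · show f s = g t
        rw [← hs, ← hpt]; exact p.2.1
      · show ξ ≤ νA (g t)
        have h := p.2.2
        rw [hpt, hξ] at h
        have hb : Nat.gcd (νA (f p.1.1) / νS p.1.1) (νA (g t) / νT t) ≤ νA (g t) := by
          have hfp : f p.1.1 = g t := by rw [← hpt]; exact p.2.1
          rw [hfp]
          rcases Nat.eq_zero_or_pos (νA (g t) / νS p.1.1) with h0 | h0
          · rw [h0, Nat.gcd_zero_left]; exact Nat.div_le_self _ _
          · exact le_trans (Nat.le_of_dvd h0 (Nat.gcd_dvd_left _ _))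
              (Nat.div_le_self _ _)
        exact le_of_lt (lt_of_lt_of_le h hb)
    have hfin : ((fun p : P => (p.1.1, p.1.2.2)) '' F).Finite :=
      Set.Finite.subset ((hffin (g t)).prod (Set.finite_Iic _)) himg
    exact Set.Finite.of_finite_image hfin hinj
end

section
/- Joins imply existence of the multiplicative pullback: Let f : S → A be an N-map and g : T → A an R-map of truncation posets, and suppose T has joins (t | t₁ and t | t₂ implies there exists t' with t₁ | t' and t₂ | t'). Then for any (s₁,t₁), (s₂,t₂) with g(t_i) | f(s_i), s_i minimal and t_i maximal, such that s₁, s₂ lie in the same connected component of S and t₁, t₂ in the same connected component of T, one has |s₁|·|t₂| = |s₂|·|t₁|. -/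
namespace TP

section Aux

variable {S : Type*} [PartialOrder S] {ν : S → ℕ}

lemma exists_le_norm (h : IsTPNorm ν) {x : S} {e : ℕ} (he : e ∣ ν x) :
    ∃ y, y ≤ x ∧ ν y = e := by
  obtain ⟨t, ⟨ht1, ht2⟩, -⟩ := h.2.2.2.1 x (ν x / e) (Nat.div_dvd_of_dvd he)
  exact ⟨t, ht1, ht2.trans (Nat.div_div_self he (h.1 x).ne')⟩

lemma eq_of_le_norm (h : IsTPNorm ν) {x y z : S} (hy : y ≤ x) (hz : z ≤ x)
    (he : ν y = ν z) : y = z := by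
  have hyd : ν y ∣ ν x := h.2.1 y x hy
  obtain ⟨t, -, huniq⟩ := h.2.2.2.1 x (ν x / ν y) (Nat.div_dvd_of_dvd hyd)
  have hxy : ν x / (ν x / ν y) = ν y := Nat.div_div_self hyd (h.1 x).ne'
  have h1 : y = t := huniq y ⟨hy, hxy.symm⟩
  have h2 : z = t := huniq z ⟨hz, by rw [hxy, he]⟩
  rw [h1, h2]

lemma le_of_norm_dvd (h : IsTPNorm ν) {x y z : S} (hy : y ≤ x) (hz : z ≤ x)
    (hd : ν y ∣ ν z) : y ≤ z := by
  obtain ⟨w, hw1, hw2⟩ := exists_le_norm h (x := z) hd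
  have hwy : w = y := eq_of_le_norm h (hw1.trans hz) hy hw2
  exact hwy ▸ hw1

end Aux

section Cross

variable {S T : Type*} [PartialOrder S] [PartialOrder T] {νS : S → ℕ} {νT : T → ℕ}

lemma tpmap_cross (hS : IsTPNorm νS) (hT : IsTPNorm νT) {f : S → T}
    (hf : IsTPMap νS νT f) {s s' : S} (h : s ≤ s') :
    νT (f s') * νS s = νT (f s) * νS s' := by
  obtain ⟨hle, heq⟩ := hf s s' h
  obtain ⟨k, hk⟩ := hS.2.1 s s' h
  obtain ⟨l, hl⟩ := hT.2.1 (f s) (f s') hle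
  rw [hk, hl] at heq
  rw [Nat.mul_div_cancel_left _ (hT.1 (f s)), Nat.mul_div_cancel_left _ (hS.1 s)] at heq
  rw [hk, hl, heq]; ring

lemma min_coprime {A : Type*} [PartialOrder A] {νA : A → ℕ}
    (hS : IsTPNorm νS) (hA : IsTPNorm νA) {f : S → A}
    (hf : IsTPMap νS νA f) {s : S} {x : A} {q : ℕ}
    (hx : x ≤ f s) (hq : νA x * q = νA (f s))
    (hmin : ∀ s', s' ≤ s → x ≤ f s' → s' = s) :
    Nat.Coprime (νS s) q := by
  have key : ∀ d, d ∣ νS s → d ∣ q → d = 1 := by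
    intro d hdn hdq
    have hd0 : 0 < d := Nat.pos_of_dvd_of_pos hdn (hS.1 s)
    obtain ⟨s', hs'le, hs'ν⟩ := exists_le_norm hS (Nat.div_dvd_of_dvd hdn)
    have hnn : νS s' * d = νS s := by rw [hs'ν]; exact Nat.div_mul_cancel hdn
    have hcross := tpmap_cross hS hA hf hs'le
    have h1 : νA (f s) = νA (f s') * d := by
      have h2 : νA (f s) * νS s' = (νA (f s') * d) * νS s' := by
        rw [hcross, ← hnn]; ring
      exact Nat.eq_of_mul_eq_mul_right (hS.1 s') h2
    obtain ⟨e, he⟩ := hdq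
    have h3 : νA (f s') = νA x * e := by
      have h4 : νA (f s') * d = (νA x * e) * d := by
        rw [← h1, ← hq, he]; ring
      exact Nat.eq_of_mul_eq_mul_right hd0 h4
    have hxle : x ≤ f s' := le_of_norm_dvd hA hx (hf s' s hs'le).1 ⟨e, h3⟩
    rw [hmin s' hs'le hxle] at hnn
    exact (Nat.eq_of_mul_eq_mul_left (hS.1 s) (by rw [mul_one]; exact hnn.symm)).symm
  exact key _ (Nat.gcd_dvd_left _ _) (Nat.gcd_dvd_right _ _)

lemma key {A : Type*} [PartialOrder A] {νA : A → ℕ}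
    (hS : IsTPNorm νS) (hT : IsTPNorm νT) (hA : IsTPNorm νA)
    {f : S → A} {g : T → A} (hf : IsTPMap νS νA f) (hg : IsTPMap νT νA g)
    {s s₀ i : S} {t t₀ : T}
    (hiν : νS i = 1) (his : i ≤ s) (his₀ : i ≤ s₀)
    (hgt : g t ≤ f s)
    (hmin : ∀ s', s' ≤ s → g t ≤ f s' → s' = s)
    (hmax : ∀ t', t ≤ t' → g t' ≤ f s → t' = t)
    (htt₀ : t ≤ t₀) (hgt₀ : g t₀ ≤ f s₀)
    (hmin₀ : ∀ s', s' ≤ s₀ → g t₀ ≤ f s' → s' = s₀) :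
    νS s * νT t₀ = νS s₀ * νT t := by
  have hc0 : 0 < νA (f i) := hA.1 _
  have hm0 : 0 < νT t := hT.1 _
  have hfs : νA (f s) = νA (f i) * νS s := by
    have h := tpmap_cross hS hA hf his
    rwa [hiν, mul_one] at h
  have hfs₀ : νA (f s₀) = νA (f i) * νS s₀ := by
    have h := tpmap_cross hS hA hf his₀
    rwa [hiν, mul_one] at h
  obtain ⟨q, hq⟩ := hA.2.1 _ _ hgt
  have hcop : Nat.Coprime (νS s) q := min_coprime hS hA hf hgt hq.symm hmin
  obtain ⟨q₀, hq₀⟩ := hA.2.1 _ _ hgt₀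
  have hcop₀ : Nat.Coprime (νS s₀) q₀ := min_coprime hS hA hf hgt₀ hq₀.symm hmin₀
  have hq0 : 0 < q := by
    rcases Nat.eq_zero_or_pos q with h | h
    · exfalso; rw [h, mul_zero] at hq; exact (hA.1 (f s)).ne' hq
    · exact h
  have hq₀0 : 0 < q₀ := by
    rcases Nat.eq_zero_or_pos q₀ with h | h
    · exfalso; rw [h, mul_zero] at hq₀; exact (hA.1 (f s₀)).ne' hq₀
    · exact h
  -- q ∣ c, write c = q * c₁, a = c₁ * n
  have hqc : q ∣ νA (f i) := by
    have h1 : q ∣ νA (f i) * νS s := ⟨νA (g t), by rw [← hfs, hq, mul_comm]⟩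
    exact hcop.symm.dvd_of_dvd_mul_right h1
  obtain ⟨c₁, hc₁⟩ := hqc
  have hc₁0 : 0 < c₁ := by
    rcases Nat.eq_zero_or_pos c₁ with h | h
    · exfalso; rw [h, mul_zero] at hc₁; exact hc0.ne' hc₁
    · exact h
  have ha : νA (g t) = c₁ * νS s := by
    have h2 : νA (g t) * q = (c₁ * νS s) * q := by
      rw [← hq, hfs, hc₁]; ring
    exact Nat.eq_of_mul_eq_mul_right hq0 h2
  -- q₀ ∣ c, write c = q₀ * c₀, b = c₀ * n₀
  have hq₀c : q₀ ∣ νA (f i) := by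
    have h1 : q₀ ∣ νA (f i) * νS s₀ := ⟨νA (g t₀), by rw [← hfs₀, hq₀, mul_comm]⟩
    exact hcop₀.symm.dvd_of_dvd_mul_right h1
  obtain ⟨c₀, hc₀⟩ := hq₀c
  have hb : νA (g t₀) = c₀ * νS s₀ := by
    have h2 : νA (g t₀) * q₀ = (c₀ * νS s₀) * q₀ := by
      rw [← hq₀, hfs₀, hc₀]; ring
    exact Nat.eq_of_mul_eq_mul_right hq₀0 h2
  -- r
  obtain ⟨r, hr⟩ := hT.2.1 _ _ htt₀
  have hbr : νA (g t₀) = νA (g t) * r := by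
    have hcr := tpmap_cross hT hA hg htt₀
    have h1 : νA (g t₀) * νT t = (νA (g t) * r) * νT t := by rw [hcr, hr]; ring
    exact Nat.eq_of_mul_eq_mul_right hm0 h1
  -- c₁ ∣ c₀
  have hc₁c₀ : c₁ ∣ c₀ := by
    obtain ⟨w, hwle, hwν⟩ := exists_le_norm hA
      (show c₁ ∣ νA (g t) from ⟨νS s, by rw [ha]⟩)
    have hwb : νA w ∣ νA (g t₀) := hA.2.1 _ _ (hwle.trans (hg t t₀ htt₀).1)
    rw [hwν] at hwb
    have hwc : c₁ ∣ νA (f i) := ⟨q, by rw [hc₁, mul_comm]⟩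
    have hgcd : Nat.gcd (νA (g t₀)) (νA (f i)) = c₀ := by
      have hc' : Nat.gcd (νS s₀) q₀ = 1 := hcop₀
      rw [hb, hc₀, mul_comm q₀ c₀, Nat.gcd_mul_left, hc', mul_one]
    exact hgcd ▸ Nat.dvd_gcd hwb hwc
  obtain ⟨e, he⟩ := hc₁c₀
  have hqe : q = q₀ * e := by
    have h1 : q * c₁ = (q₀ * e) * c₁ := by rw [← hc₁, hc₀, he]; ring
    exact Nat.eq_of_mul_eq_mul_right hc₁0 h1
  -- star: n*r*q₀ = n₀*q
  have hstar : νS s * r * q₀ = νS s₀ * q := by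
    have h1 : νA (f i) * (νS s * r * q₀) = νA (f i) * (νS s₀ * q) := by
      calc νA (f i) * (νS s * r * q₀) = (νA (f i) * νS s) * r * q₀ := by ring
        _ = (νA (g t) * q) * r * q₀ := by rw [← hfs, hq]
        _ = (νA (g t) * r) * q₀ * q := by ring
        _ = νA (g t₀) * q₀ * q := by rw [hbr]
        _ = νA (f s₀) * q := by rw [hq₀]
        _ = νA (f i) * (νS s₀ * q) := by rw [hfs₀]; ring
    exact Nat.eq_of_mul_eq_mul_left hc0 h1
  have hre : νS s * r = νS s₀ * e := by
    have h1 : (νS s * r) * q₀ = (νS s₀ * e) * q₀ := by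
      calc (νS s * r) * q₀ = νS s₀ * q := hstar
        _ = νS s₀ * (q₀ * e) := by rw [hqe]
        _ = (νS s₀ * e) * q₀ := by ring
    exact Nat.eq_of_mul_eq_mul_right hq₀0 h1
  have hcope : Nat.Coprime (νS s) e :=
    Nat.Coprime.coprime_dvd_right ⟨q₀, by rw [hqe]; ring⟩ hcop
  have hnn₀ : νS s ∣ νS s₀ := hcope.dvd_of_dvd_mul_right ⟨r, hre.symm⟩
  have her : e ∣ r := by
    have h1 : e ∣ νS s * r := ⟨νS s₀, by rw [hre, mul_comm]⟩
    exact hcope.symm.dvd_of_dvd_mul_left h1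
  -- f s ≤ f s₀
  obtain ⟨y, hyle, hyν⟩ := exists_le_norm hA
    (show νA (f i) * νS s ∣ νA (f s₀) by rw [hfs₀]; exact mul_dvd_mul_left _ hnn₀)
  have hfiy : f i ≤ y :=
    le_of_norm_dvd hA (hf i s₀ his₀).1 hyle (by rw [hyν]; exact dvd_mul_right _ _)
  have hfsy : f s = y := hA.2.2.2.2 (f i) (f s) y (hf i s his).1 hfiy (by rw [hyν, hfs])
  have hfss₀ : f s ≤ f s₀ := hfsy ▸ hyle
  -- gcd r q = 1 from maximality
  have hgcd1 : Nat.gcd r q = 1 := by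
    obtain ⟨t'', ht''le, ht''ν⟩ := exists_le_norm hT
      (show νT t * Nat.gcd r q ∣ νT t₀ by
        rw [hr]; exact mul_dvd_mul_left _ (Nat.gcd_dvd_left r q))
    have htt'' : t ≤ t'' :=
      le_of_norm_dvd hT htt₀ ht''le (by rw [ht''ν]; exact dvd_mul_right _ _)
    have hgt''ν : νA (g t'') = νA (g t) * Nat.gcd r q := by
      have hcr := tpmap_cross hT hA hg htt''
      have h1 : νA (g t'') * νT t = (νA (g t) * Nat.gcd r q) * νT t := by
        rw [hcr, ht''ν]; ring
      exact Nat.eq_of_mul_eq_mul_right hm0 h1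
    have hgt''fs : g t'' ≤ f s := by
      apply le_of_norm_dvd hA ((hg t'' t₀ ht''le).1.trans hgt₀) hfss₀
      rw [hgt''ν, hq]
      exact mul_dvd_mul_left _ (Nat.gcd_dvd_right r q)
    have ht''t := hmax t'' htt'' hgt''fs
    rw [ht''t] at ht''ν
    exact (Nat.eq_of_mul_eq_mul_left hm0 (by rw [mul_one]; exact ht''ν)).symm
  have he1 : e = 1 :=
    Nat.dvd_one.mp (hgcd1 ▸ Nat.dvd_gcd her ⟨q₀, by rw [hqe]; ring⟩)
  have hfin : νS s * r = νS s₀ := by rw [hre, he1, mul_one]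
  rw [hr, ← hfin]; ring

end Cross

end TP



/-- Joins imply existence of the multiplicative pullback: if `f : S → A` is an N-map,
`g : T → A` an R-map and `T` has joins, then for pairs `(s₁,t₁)`, `(s₂,t₂)` with
`g tᵢ ≤ f sᵢ`, `sᵢ` minimal and `tᵢ` maximal, lying in the same connected components,
one has `|s₁|·|t₂| = |s₂|·|t₁|`. -/
theorem stmt15 {S T A : Type*} [PartialOrder S] [PartialOrder T] [PartialOrder A]
    (νS : S → ℕ) (νT : T → ℕ) (νA : A → ℕ)
    (hS : TP.IsTPNorm νS) (hT : TP.IsTPNorm νT) (hA : TP.IsTPNorm νA)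
    (f : S → A) (g : T → A) (hf : TP.IsNMap νS νA f) (hg : TP.IsTPMap νT νA g)
    (hjoin : ∀ t t₁ t₂ : T, t ≤ t₁ → t ≤ t₂ → ∃ t' : T, t₁ ≤ t' ∧ t₂ ≤ t') :
    ∀ (s₁ s₂ : S) (t₁ t₂ : T),
      g t₁ ≤ f s₁ → (∀ s' : S, s' ≤ s₁ → g t₁ ≤ f s' → s' = s₁) →
      (∀ t' : T, t₁ ≤ t' → g t' ≤ f s₁ → t' = t₁) →
      g t₂ ≤ f s₂ → (∀ s' : S, s' ≤ s₂ → g t₂ ≤ f s' → s' = s₂) →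
      (∀ t' : T, t₂ ≤ t' → g t' ≤ f s₂ → t' = t₂) →
      TP.SameComp νS s₁ s₂ → TP.SameComp νT t₁ t₂ →
      νS s₁ * νT t₂ = νS s₂ * νT t₁ := by

  intro s₁ s₂ t₁ t₂ hg1 hmin1 hmax1 hg2 hmin2 hmax2 hSC hTC
  classical
  obtain ⟨i, hi1, hi2, hi3⟩ := hSC
  obtain ⟨j, hj1, hj2, hj3⟩ := hTC
  obtain ⟨t₀, ht1, ht2⟩ := hjoin j t₁ t₂ hj2 hj3
  obtain ⟨ε, hεle, hεν⟩ := TP.exists_le_norm hA (one_dvd (νA (g t₁)))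
  obtain ⟨s', hsc', hgs'⟩ := hf.2.1 s₁ (g t₀)
    ⟨ε, hεν, hεle.trans hg1, hεle.trans (hg t₁ t₀ ht1).1⟩
  obtain ⟨i', hi'ν, hi's₁, hi's'⟩ := hsc'
  have hii' : i' = i := TP.eq_of_le_norm hS hi's₁ hi2 (by rw [hi'ν, hi1])
  rw [hii'] at hi's'
  -- minimal s₀ below s' with g t₀ ≤ f s₀
  have hex : ∃ nn : ℕ, ∃ s'' : S, s'' ≤ s' ∧ g t₀ ≤ f s'' ∧ νS s'' = nn :=
    ⟨νS s', s', le_refl _, hgs', rfl⟩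
  obtain ⟨s₀, hs₀le, hs₀g, hs₀ν⟩ := Nat.find_spec hex
  have hmin₀ : ∀ s'', s'' ≤ s₀ → g t₀ ≤ f s'' → s'' = s₀ := by
    intro s'' h1 h2
    have hdvd : νS s'' ∣ νS s₀ := hS.2.1 _ _ h1
    have hle' : Nat.find hex ≤ νS s'' := Nat.find_min' hex ⟨s'', h1.trans hs₀le, h2, rfl⟩
    have hle2 : νS s'' ≤ νS s₀ := Nat.le_of_dvd (hS.1 _) hdvd
    have heq : νS s'' = νS s₀ := le_antisymm hle2 (by rw [hs₀ν]; exact hle')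
    exact TP.eq_of_le_norm hS h1 (le_refl s₀) heq
  -- i ≤ s₀
  obtain ⟨i'', hi''le, hi''ν⟩ := TP.exists_le_norm hS (one_dvd (νS s₀))
  have hii'' : i'' = i :=
    TP.eq_of_le_norm hS (hi''le.trans hs₀le) hi's' (by rw [hi''ν, hi1])
  have his₀ : i ≤ s₀ := hii'' ▸ hi''le
  -- apply the key lemma to both pairs
  have k1 := TP.key hS hT hA hf.1 hg hi1 hi2 his₀ hg1 hmin1 hmax1 ht1 hs₀g hmin₀
  have k2 := TP.key hS hT hA hf.1 hg hi1 hi3 his₀ hg2 hmin2 hmax2 ht2 hs₀g hmin₀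
  have hpos : 0 < νS s₀ * νT t₀ := Nat.mul_pos (hS.1 _) (hT.1 _)
  apply Nat.eq_of_mul_eq_mul_right hpos
  calc νS s₁ * νT t₂ * (νS s₀ * νT t₀)
      = (νS s₁ * νT t₀) * (νS s₀ * νT t₂) := by ring
    _ = (νS s₀ * νT t₁) * (νS s₂ * νT t₀) := by rw [k1, ← k2]
    _ = νS s₂ * νT t₁ * (νS s₀ * νT t₀) := by ring
end

section
/- The classical norm on ghost coordinates defines a Witt vector map: Let S ⊂ ℕ be a truncation set, n a positive integer, and ⟨n⟩S = { es : e | n, s ∈ S }. Let k be a commutative ring and for each prime p fix a ring map φ_p : k → k with φ_p(a) ≡ a^p mod p. Then for any vector ⟨x_s⟩_{s∈S} in the image of the ghost map w : W_S(k) → k^S, the vector ⟨y_t⟩_{t ∈ ⟨n⟩S} defined by y_t = x_{t/g}^{g} with g = gcd(n, t), is in the image of the ghost map w : W_{⟨n⟩S}(k) → k^{⟨n⟩S}. -/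
section Aux
variable {k : Type*} [CommRing k]

lemma aux_step (p : ℕ) {a b : k} {c : ℕ} (hc : 1 ≤ c) (h : (p : k) ^ c ∣ a - b) :
    (p : k) ^ (c + 1) ∣ a ^ p - b ^ p := by
  have hpab : (p : k) ∣ a - b := dvd_trans (dvd_pow_self _ (by omega)) h
  have hsum : (p : k) ∣ ∑ i ∈ Finset.range p, a ^ i * b ^ (p - 1 - i) := by
    have h2 : (p : k) ∣ (∑ i ∈ Finset.range p, a ^ i * b ^ (p - 1 - i))
        - (∑ _i ∈ Finset.range p, b ^ (p - 1)) := by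
      rw [← Finset.sum_sub_distrib]
      refine Finset.dvd_sum fun i hi => ?_
      have hb : b ^ i * b ^ (p - 1 - i) = b ^ (p - 1) := by
        rw [← pow_add]; congr 1
        have := Finset.mem_range.mp hi; omega
      have : a ^ i * b ^ (p - 1 - i) - b ^ (p - 1)
          = (a ^ i - b ^ i) * b ^ (p - 1 - i) := by rw [sub_mul, hb]
      rw [this]
      exact Dvd.dvd.mul_right (dvd_trans hpab (sub_dvd_pow_sub_pow a b i)) _
    have h3 : (p : k) ∣ (∑ _i ∈ Finset.range p, b ^ (p - 1) : k) := by
      simp only [Finset.sum_const, Finset.card_range, nsmul_eq_mul]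
      exact Dvd.dvd.mul_right (dvd_refl _) _
    simpa using dvd_add h2 h3
  rw [← geom_sum₂_mul a b p, pow_succ, mul_comm ((p : k) ^ c) (p : k)]
  exact mul_dvd_mul hsum h

lemma aux_pow (p : ℕ) {a b : k} {c : ℕ} (hc : 1 ≤ c) (h : (p : k) ^ c ∣ a - b)
    {N j : ℕ} (hj : p ^ j ∣ N) : (p : k) ^ (c + j) ∣ a ^ N - b ^ N := by
  have H : ∀ j : ℕ, (p : k) ^ (c + j) ∣ a ^ p ^ j - b ^ p ^ j := by
    intro j
    induction j with
    | zero => simpa using h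
    | succ j ih =>
        have := aux_step p (c := c + j) (by omega) ih
        rw [← pow_mul, ← pow_mul, ← pow_succ] at this
        convert this using 2 <;> omega
  obtain ⟨r, rfl⟩ := hj
  have : a ^ (p ^ j * r) - b ^ (p ^ j * r) = (a ^ p ^ j) ^ r - (b ^ p ^ j) ^ r := by
    rw [pow_mul, pow_mul]
  rw [this]
  exact dvd_trans (H j) (sub_dvd_pow_sub_pow _ _ r)

lemma aux_combine : ∀ t : ℕ, 0 < t → ∀ c : k,
    (∀ p : ℕ, p.Prime → p ∣ t → (p : k) ^ (t.factorization p) ∣ c) → (t : k) ∣ c := by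
  intro t
  induction t using Nat.strong_induction_on with
  | _ t ih =>
    intro ht c hc
    rcases eq_or_ne t 1 with rfl | ht1
    · simpa using one_dvd c
    obtain ⟨p, pp, hpt⟩ := Nat.exists_prime_and_dvd ht1
    set v := t.factorization p with hv
    set m := ordCompl[p] t with hm
    have ht0 : t ≠ 0 := ht.ne'
    have hv1 : 1 ≤ v := pp.factorization_pos_of_dvd ht0 hpt
    have hm0 : 0 < m := Nat.ordCompl_pos p ht0
    have hmt : m < t := by
      exact Nat.div_lt_self ht (Nat.one_lt_pow (by omega) pp.one_lt)
    have hmc : (m : k) ∣ c := by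
      refine ih m hmt hm0 c fun q hq hqm => ?_
      have hqp : q ≠ p := by
        rintro rfl
        exact (Nat.not_dvd_ordCompl pp ht0 hqm).elim
      have hqt : q ∣ t := hqm.trans (Nat.ordCompl_dvd t p)
      have : m.factorization q = t.factorization q := by
        rw [hm, Nat.factorization_ordCompl, Finsupp.erase_ne hqp]
      rw [this]
      exact hc q hq hqt
    have hpc : (p : k) ^ v ∣ c := hc p pp hpt
    have hcop : Nat.Coprime (p ^ v) m :=
      Nat.Coprime.pow_left v (Nat.coprime_ordCompl pp ht0)
    have := (Nat.Coprime.cast (R := k) hcop).mul_dvd (by push_cast; exact hpc) hmc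
    rw [← Nat.cast_mul, Nat.ordProj_mul_ordCompl_eq_self t p] at this
    exact this

end Aux

section Aux2
variable {k : Type*} [CommRing k]

lemma aux_ghost (p : ℕ) (pp : p.Prime) (φp : k →+* k) (hφp : ∀ y : k, (p : k) ∣ y ^ p - φp y)
    (a : ℕ → k) (m : ℕ) (hm0 : 0 < m) (hpm : p ∣ m) :
    (p : k) ^ (m.factorization p) ∣
      (∑ d ∈ m.divisors, (d : k) * a d ^ (m / d))
        - φp (∑ d ∈ (m / p).divisors, (d : k) * a d ^ (m / p / d)) := by
  set c := m.factorization p with hc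
  have hm0' : m ≠ 0 := hm0.ne'
  have hc1 : 1 ≤ c := pp.factorization_pos_of_dvd hm0' hpm
  have hmp0 : m / p ≠ 0 := (Nat.div_pos (Nat.le_of_dvd hm0 hpm) pp.pos).ne'
  have hmpf : (m / p).factorization p = c - 1 := by
    rw [Nat.factorization_div hpm, Finsupp.tsub_apply, pp.factorization, Finsupp.single_eq_same]
  have hφmap : φp (∑ d ∈ (m / p).divisors, (d : k) * a d ^ (m / p / d))
      = ∑ d ∈ (m / p).divisors, (d : k) * (φp (a d)) ^ (m / p / d) := by
    rw [map_sum]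
    refine Finset.sum_congr rfl fun d _ => ?_
    rw [map_mul, map_pow, map_natCast]
  have hsub : (m / p).divisors ⊆ m.divisors :=
    Nat.divisors_subset_of_dvd hm0' (Nat.div_dvd_of_dvd hpm)
  have hsplit : (∑ d ∈ m.divisors, (d : k) * a d ^ (m / d))
        - φp (∑ d ∈ (m / p).divisors, (d : k) * a d ^ (m / p / d))
      = (∑ d ∈ m.divisors \ (m / p).divisors, (d : k) * a d ^ (m / d))
        + ∑ d ∈ (m / p).divisors,
            ((d : k) * a d ^ (m / d) - (d : k) * (φp (a d)) ^ (m / p / d)) := by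
    rw [hφmap, Finset.sum_sub_distrib, ← Finset.sum_sdiff hsub]
    ring
  rw [hsplit]
  refine dvd_add (Finset.dvd_sum fun d hd => ?_) (Finset.dvd_sum fun d hd => ?_)
  · -- d ∣ m but d ∤ m/p : p^c ∣ d
    obtain ⟨hdm, hdn⟩ := Finset.mem_sdiff.mp hd
    have hdm' : d ∣ m := (Nat.mem_divisors.mp hdm).1
    have hd0 : d ≠ 0 := by rintro rfl; exact hm0' (zero_dvd_iff.mp hdm')
    have hpcd : p ^ c ∣ d := by
      by_contra hnot
      have hdfp : d.factorization p ≤ c - 1 := by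
        have := (pp.pow_dvd_iff_le_factorization hd0).not.mp hnot
        omega
      have : d ∣ m / p := by
        rw [← Nat.factorization_le_iff_dvd hd0 hmp0]
        intro q
        rcases eq_or_ne q p with rfl | hq
        · rw [hmpf]; exact hdfp
        · rw [Nat.factorization_div hpm, Finsupp.tsub_apply, pp.factorization,
            Finsupp.single_eq_of_ne' (Ne.symm hq), Nat.sub_zero]
          exact (Nat.factorization_le_iff_dvd hd0 hm0').mpr hdm' q
      exact hdn (Nat.mem_divisors.mpr ⟨this, hmp0⟩)
    have : ((p : k)) ^ c ∣ (d : k) := by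
      have := Nat.cast_dvd_cast (α := k) hpcd
      push_cast at this; exact this
    exact this.mul_right _
  · -- d ∣ m/p
    have hdm : d ∣ m / p := (Nat.mem_divisors.mp hd).1
    have hd0 : d ≠ 0 := by rintro rfl; exact hmp0 (zero_dvd_iff.mp hdm)
    have hpd : p * d ∣ m := (Nat.dvd_div_iff_mul_dvd hpm).mp hdm
    set j := d.factorization p with hj
    have hjc : j ≤ c - 1 := by
      have := (Nat.factorization_le_iff_dvd hd0 hmp0).mpr hdm p
      rw [hmpf] at this; exact this
    obtain ⟨q, hq⟩ := hpd
    have hpd0 : p * d ≠ 0 := Nat.mul_ne_zero pp.pos.ne' hd0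
    have hq0 : q ≠ 0 := by rintro rfl; simp at hq; omega
    have hmd : m / d = p * q := by rw [hq, mul_comm p d, mul_assoc]; exact Nat.mul_div_cancel_left _ (Nat.pos_of_ne_zero hd0)
    have hmpd : m / p / d = q := by
      rw [Nat.div_div_eq_div_mul, hq]; exact Nat.mul_div_cancel_left _ (Nat.pos_of_ne_zero hpd0)
    have hqf : q.factorization p = c - 1 - j := by
      have : q = m / (p * d) := by rw [hq]; exact (Nat.mul_div_cancel_left _ (Nat.pos_of_ne_zero hpd0)).symm
      rw [this, Nat.factorization_div ⟨q, hq⟩, Finsupp.tsub_apply,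
        Nat.factorization_mul pp.pos.ne' hd0, Finsupp.add_apply, pp.factorization,
        Finsupp.single_eq_same, hc]
      omega
    have hterm : (d : k) * a d ^ (m / d) - (d : k) * (φp (a d)) ^ (m / p / d)
        = (d : k) * ((a d ^ p) ^ q - (φp (a d)) ^ q) := by
      rw [hmd, hmpd, pow_mul, mul_sub]
    rw [hterm]
    have hdiff : (p : k) ^ (1 + (c - 1 - j)) ∣ (a d ^ p) ^ q - (φp (a d)) ^ q := by
      refine aux_pow p le_rfl (by simpa using hφp (a d)) ?_
      rw [pp.pow_dvd_iff_le_factorization hq0, hqf]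
    have hdj : (p : k) ^ j ∣ (d : k) := by
      have := Nat.cast_dvd_cast (α := k) (Nat.ordProj_dvd d p)
      push_cast at this; exact this
    have := mul_dvd_mul hdj hdiff
    rw [← pow_add] at this
    have hexp : j + (1 + (c - 1 - j)) = c := by omega
    rwa [hexp] at this

end Aux2

section Aux3
variable {k : Type*} [CommRing k]

open scoped Classical in
noncomputable def pickDiv (t : ℕ) (R : k) : k := if h : (t : k) ∣ R then h.choose else 0

lemma pickDiv_spec (t : ℕ) (R : k) (h : (t : k) ∣ R) : (t : k) * pickDiv t R = R := by
  classical
  rw [pickDiv]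
  rw [dif_pos h]
  exact h.choose_spec.symm

noncomputable def bRec (z : ℕ → k) : ℕ → k
  | t => pickDiv t (z t - ∑ d ∈ (t.divisors.erase t).attach,
      (d.1 : k) * (bRec z d.1) ^ (t / d.1))
  decreasing_by
    obtain ⟨hne, hmem⟩ := Finset.mem_erase.mp d.2
    obtain ⟨hdvd, ht0⟩ := Nat.mem_divisors.mp hmem
    exact lt_of_le_of_ne (Nat.le_of_dvd (Nat.pos_of_ne_zero ht0) hdvd) hne

lemma bRec_eq (z : ℕ → k) (t : ℕ) :
    bRec z t = pickDiv t (z t - ∑ d ∈ t.divisors.erase t, (d : k) * (bRec z d) ^ (t / d)) := by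
  rw [bRec]
  congr 1
  rw [Finset.sum_attach (t.divisors.erase t) (fun d => (d : k) * (bRec z d) ^ (t / d))]

end Aux3

/-- The classical norm on ghost coordinates defines a Witt vector map: if
`⟨x_s⟩_{s ∈ S}` is in the image of the ghost map over `S`, then
`⟨y_t⟩ = ⟨x_{t/gcd(n,t)}^{gcd(n,t)}⟩` is in the image of the ghost map over `⟨n⟩S`. -/
theorem stmt19 (S : Set ℕ) (hpos : ∀ s ∈ S, 0 < s)
    (hdvd : ∀ s ∈ S, ∀ d : ℕ, d ∣ s → 0 < d → d ∈ S)
    (n : ℕ) (hn : 0 < n) {k : Type*} [CommRing k]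
    (φ : ∀ p : ℕ, p.Prime → k →+* k)
    (hφ : ∀ (p : ℕ) (hp : p.Prime) (a : k), φ p hp a - a ^ p ∈ Ideal.span {(p : k)})
    (x : ℕ → k)
    (hx : ∃ a : ℕ → k, ∀ s ∈ S, x s = ∑ d ∈ s.divisors, (d : k) * a d ^ (s / d)) :
    ∃ b : ℕ → k, ∀ t : ℕ, (∃ e u : ℕ, e ∣ n ∧ u ∈ S ∧ t = e * u) →
      x (t / Nat.gcd n t) ^ Nat.gcd n t = ∑ d ∈ t.divisors, (d : k) * b d ^ (t / d) := by
  obtain ⟨a, ha⟩ := hx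
  have hn0 : n ≠ 0 := hn.ne'
  set T : ℕ → Prop := fun t => ∃ e u : ℕ, e ∣ n ∧ u ∈ S ∧ t = e * u with hTdef
  set z : ℕ → k := fun t => x (t / Nat.gcd n t) ^ Nat.gcd n t with hzdef
  have hφ' : ∀ (p : ℕ) (pp : p.Prime) (y : k), (p : k) ∣ y ^ p - φ p pp y := fun p pp y =>
    dvd_sub_comm.mp (Ideal.mem_span_singleton.mp (hφ p pp y))
  have Tpos : ∀ t, T t → 0 < t := by
    rintro t ⟨e, u, he, hu, rfl⟩
    exact Nat.mul_pos (Nat.pos_of_dvd_of_pos he hn) (hpos u hu)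
  have Tclosed : ∀ t, T t → ∀ d, d ∣ t → 0 < d → T d := by
    rintro t ⟨e, u, he, hu, rfl⟩ d hd hd0
    have he0 : 0 < e := Nat.pos_of_dvd_of_pos he hn
    set e' := Nat.gcd e d with he'def
    have he'0 : 0 < e' := Nat.gcd_pos_of_pos_left d he0
    have hee : e' ∣ e := Nat.gcd_dvd_left e d
    have hed : e' ∣ d := Nat.gcd_dvd_right e d
    obtain ⟨w, hw⟩ := hd
    have key : d / e' ∣ (e / e') * u := by
      refine ⟨w, ?_⟩
      have h1 : e' * ((e / e') * u) = e' * (d / e' * w) := by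
        rw [← mul_assoc, ← mul_assoc, Nat.mul_div_cancel' hee, Nat.mul_div_cancel' hed, hw]
      exact Nat.eq_of_mul_eq_mul_left he'0 h1
    have hcop : Nat.Coprime (e / e') (d / e') := Nat.coprime_div_gcd_div_gcd he'0
    have hd'u : d / e' ∣ u := (Nat.Coprime.dvd_of_dvd_mul_left hcop.symm key)
    have hd'pos : 0 < d / e' := Nat.div_pos (Nat.le_of_dvd hd0 hed) he'0
    exact ⟨e', d / e', hee.trans he, hdvd u hu _ hd'u hd'pos, (Nat.mul_div_cancel' hed).symm⟩
  have hmS : ∀ t, T t → t / Nat.gcd n t ∈ S := by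
    rintro t ⟨e, u, he, hu, rfl⟩
    have he0 : 0 < e := Nat.pos_of_dvd_of_pos he hn
    have ht0 : 0 < e * u := Nat.mul_pos he0 (hpos u hu)
    set g := Nat.gcd n (e * u) with hgdef
    have hg0 : 0 < g := Nat.gcd_pos_of_pos_left _ hn
    have he' : e ∣ g := Nat.dvd_gcd he ⟨u, rfl⟩
    have hgt : g ∣ e * u := Nat.gcd_dvd_right n (e * u)
    obtain ⟨m, hm⟩ := hgt
    have hdivg : e * u / g = m := by rw [hm]; exact Nat.mul_div_cancel_left _ hg0
    obtain ⟨f, hf⟩ := he'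
    have hu' : u = f * m := by
      have : e * u = e * (f * m) := by rw [hm, hf, mul_assoc]
      exact Nat.eq_of_mul_eq_mul_left he0 this
    have hmpos : 0 < m := by
      rcases Nat.eq_zero_or_pos m with rfl | h
      · simp [hm] at ht0
      · exact h
    rw [hdivg]
    exact hdvd u hu m (Dvd.intro_left f hu'.symm) hmpos
  have zdwork : ∀ t, T t → ∀ (p : ℕ) (pp : p.Prime), p ∣ t →
      (p : k) ^ (t.factorization p) ∣ z t - φ p pp (z (t / p)) := by
    intro t hT p pp hpt
    have ht0 : 0 < t := Tpos t hT
    have ht0' : t ≠ 0 := ht0.ne'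
    set g := Nat.gcd n t with hgdef
    set β := t.factorization p with hβdef
    have hg0 : g ≠ 0 := (Nat.gcd_pos_of_pos_left _ hn).ne'
    have hβ1 : 1 ≤ β := pp.factorization_pos_of_dvd ht0' hpt
    have htp0 : t / p ≠ 0 := (Nat.div_pos (Nat.le_of_dvd ht0 hpt) pp.pos).ne'
    set g' := Nat.gcd n (t / p) with hg'def
    have hg'0 : g' ≠ 0 := (Nat.gcd_pos_of_pos_left _ hn).ne'
    set α := n.factorization p with hαdef
    have hgf : ∀ q, g.factorization q = min (n.factorization q) (t.factorization q) := by
      intro q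
      rw [hgdef, Nat.factorization_gcd hn0 ht0', Finsupp.inf_apply]
    have htpf : ∀ q, (t / p).factorization q
        = t.factorization q - (Finsupp.single p 1 : ℕ →₀ ℕ) q := by
      intro q
      rw [Nat.factorization_div hpt, Finsupp.tsub_apply, pp.factorization]
    have hg'f : ∀ q, g'.factorization q
        = min (n.factorization q) ((t / p).factorization q) := by
      intro q
      rw [hg'def, Nat.factorization_gcd hn0 htp0, Finsupp.inf_apply]
    have hmS' : t / g ∈ S := hmS t hT
    have hm0 : t / g ≠ 0 := (Nat.div_pos (Nat.le_of_dvd ht0 (Nat.gcd_dvd_right n t)) (Nat.pos_of_ne_zero hg0)).ne'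
    show (p : k) ^ β ∣ x (t / g) ^ g - φ p pp (x (t / p / g') ^ g')
    by_cases hcase : β ≤ α
    · -- case A : g = p * g'
      have hgpg' : g = p * g' := by
        refine Nat.eq_of_factorization_eq hg0 (Nat.mul_ne_zero pp.pos.ne' hg'0) fun q => ?_
        rw [Nat.factorization_mul pp.pos.ne' hg'0, Finsupp.add_apply, pp.factorization,
          hgf, hg'f, htpf]
        rcases eq_or_ne q p with rfl | hq
        · simp only [Finsupp.single_eq_same]
          omega
        · simp only [Finsupp.single_eq_of_ne' (Ne.symm hq)]
          omega
      have hm' : t / p / g' = t / g := by rw [Nat.div_div_eq_div_mul, ← hgpg']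
      rw [hm', map_pow, show x (t / g) ^ g = (x (t / g) ^ p) ^ g' by
        rw [← pow_mul, ← hgpg']]
      have hj : p ^ (β - 1) ∣ g' := by
        rw [pp.pow_dvd_iff_le_factorization hg'0, hg'f, htpf, Finsupp.single_eq_same]
        omega
      have := aux_pow p (c := 1) le_rfl (by simpa using hφ' p pp (x (t / g))) hj
      rwa [show 1 + (β - 1) = β by omega] at this
    · -- case B : g' = g
      push_neg at hcase
      have hg'g : g' = g := by
        refine Nat.eq_of_factorization_eq hg'0 hg0 fun q => ?_
        rw [hgf, hg'f, htpf]
        rcases eq_or_ne q p with rfl | hq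
        · simp only [Finsupp.single_eq_same]; omega
        · simp only [Finsupp.single_eq_of_ne' (Ne.symm hq)]; omega
      have hmf : (t / g).factorization p = β - α := by
        rw [Nat.factorization_div (Nat.gcd_dvd_right n t), Finsupp.tsub_apply, hgf]
        omega
      have hpm : p ∣ t / g := by
        rw [← pow_one p, pp.pow_dvd_iff_le_factorization hm0, hmf]
        omega
      have hmpS : t / g / p ∈ S :=
        hdvd _ hmS' _ (Nat.div_dvd_of_dvd hpm)
          (Nat.div_pos (Nat.le_of_dvd (Nat.pos_of_ne_zero hm0) hpm) pp.pos)
      have hm' : t / p / g' = t / g / p := by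
        rw [hg'g, Nat.div_div_eq_div_mul, Nat.div_div_eq_div_mul, mul_comm]
      rw [hm', hg'g, map_pow]
      have step1 : (p : k) ^ (β - α) ∣ x (t / g) - φ p pp (x (t / g / p)) := by
        rw [ha _ hmS', ha _ hmpS]
        have := aux_ghost p pp (φ p pp) (hφ' p pp) a (t / g) (Nat.pos_of_ne_zero hm0) hpm
        rwa [hmf] at this
      have := aux_pow p (c := β - α) (by omega) step1
        (N := g) (j := α) (by rw [pp.pow_dvd_iff_le_factorization hg0, hgf]; omega)
      rwa [show β - α + α = β by omega] at this
  have main : ∀ t, T t → ∑ d ∈ t.divisors, (d : k) * (bRec z d) ^ (t / d) = z t := by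
    intro t
    induction t using Nat.strong_induction_on with
    | _ t ih =>
      intro hT
      have ht0 : 0 < t := Tpos t hT
      have ht0' : t ≠ 0 := ht0.ne'
      have herase : ∑ d ∈ t.divisors.erase t, (d : k) * (bRec z d) ^ (t / d)
          + (t : k) * (bRec z t) ^ (t / t)
          = ∑ d ∈ t.divisors, (d : k) * (bRec z d) ^ (t / d) :=
        Finset.sum_erase_add _ _ (Nat.mem_divisors_self t ht0')
      rw [Nat.div_self ht0, pow_one] at herase
      have hRdvd : (t : k) ∣ z t - ∑ d ∈ t.divisors.erase t, (d : k) * (bRec z d) ^ (t / d) := by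
        apply aux_combine t ht0
        intro p pp hpt
        have htp0 : 0 < t / p := Nat.div_pos (Nat.le_of_dvd ht0 hpt) pp.pos
        have htpT : T (t / p) := Tclosed t hT (t / p) (Nat.div_dvd_of_dvd hpt) htp0
        have htplt : t / p < t := Nat.div_lt_self ht0 pp.one_lt
        have ihW : ∑ d ∈ (t / p).divisors, (d : k) * (bRec z d) ^ (t / p / d) = z (t / p) :=
          ih (t / p) htplt htpT
        have hA : (p : k) ^ (t.factorization p) ∣ z t - φ p pp (z (t / p)) :=
          zdwork t hT p pp hpt
        have hB : (p : k) ^ (t.factorization p)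
            ∣ (∑ d ∈ t.divisors, (d : k) * (bRec z d) ^ (t / d)) - φ p pp (z (t / p)) := by
          have := aux_ghost p pp (φ p pp) (hφ' p pp) (bRec z) t ht0 hpt
          rwa [ihW] at this
        have htb : (p : k) ^ (t.factorization p) ∣ (t : k) * bRec z t := by
          have h1 : ((p : k)) ^ (t.factorization p) ∣ (t : k) := by
            have := Nat.cast_dvd_cast (α := k) (Nat.ordProj_dvd t p)
            push_cast at this; exact this
          exact h1.mul_right _
        have hsplit : z t - ∑ d ∈ t.divisors.erase t, (d : k) * (bRec z d) ^ (t / d)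
            = (z t - φ p pp (z (t / p)))
              - ((∑ d ∈ t.divisors, (d : k) * (bRec z d) ^ (t / d)) - φ p pp (z (t / p)))
              + (t : k) * bRec z t := by
          rw [← herase]; ring
        rw [hsplit]
        exact dvd_add (dvd_sub hA hB) htb
      have hspec := pickDiv_spec t _ hRdvd
      rw [← bRec_eq] at hspec
      rw [← herase, hspec]; ring
  refine ⟨bRec z, fun t ht => ?_⟩
  have := (main t ht).symm
  rw [hzdef] at this
  simpa using this
end
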